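/- arXiv:2008.07454 — 4 statements merged into one kernel-verified Lean document; each statement's English description precedes it below -/
import Mathlib

section
/- (Higher-order parameter shift formula, Eq. (12)) Let M ∈ ℕ and let C : (Fin M → ℝ) → ℝ be such that for every coordinate l and every point θ, the one-variable function t ↦ C(θ with l-th coordinate replaced by t) has the form a + b·cos t + c·sin t (with a, b, c depending on the other coordinates), and let N : Fin M → ℕ be multiplicities with total order |α| = Σ_l N(l). Then the mixed partial derivative ∂₁^{N(1)} ⋯ ∂_M^{N(M)} C(θ) exists and equals 2^{−|α|} · Σ_{ω} ( Π_{l} d(ω(l), N(l)) ) · C(θ + π·ω), where the sum runs over all functions ω assigning to each coordinate l a shift ω(l) in the support for N(l), and d are the Pascal-tree coefficients: d(0,0) = 1; d(±1/2,1) = ±1; for even N ≥ 2, d(0,N) = (−1)^{N/2}·2^{N−1}, d(±1,N) = (−1)^{(N−2)/2}·2^{N−2} with support {0,±1}; for odd N ≥ 3, d(±1/2,N) = ±(−1)^{(N−1)/2}·3·2^{N−3}, d(±3/2,N) = ∓(−1)^{(N−1)/2}·2^{N−3} with support {±1/2,±3/2}. -/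
/-- The Pascal-tree coefficients `d(ω, N)`. -/
def pascalD (ω : ℚ) (N : ℕ) : ℤ :=
  if N = 0 then (if ω = 0 then 1 else 0)
  else if N = 1 then (if ω = 1/2 then 1 else if ω = -1/2 then -1 else 0)
  else if N % 2 = 0 then
    (if ω = 0 then (-1) ^ (N / 2) * 2 ^ (N - 1)
     else if ω = 1 ∨ ω = -1 then (-1) ^ ((N - 2) / 2) * 2 ^ (N - 2)
     else 0)
  else
    (if ω = 1/2 then (-1) ^ ((N - 1) / 2) * 3 * 2 ^ (N - 3)
     else if ω = -1/2 then -((-1) ^ ((N - 1) / 2) * 3 * 2 ^ (N - 3))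
     else if ω = 3/2 then -((-1) ^ ((N - 1) / 2) * 2 ^ (N - 3))
     else if ω = -3/2 then (-1) ^ ((N - 1) / 2) * 2 ^ (N - 3)
     else 0)

/-- The support of the Pascal-tree coefficients at order `N`. -/
def pascalSupport (N : ℕ) : Finset ℚ :=
  if N = 0 then {0}
  else if N = 1 then {1/2, -1/2}
  else if N % 2 = 0 then {0, 1, -1}
  else {1/2, -1/2, 3/2, -3/2}

/-- Partial derivative of `C` with respect to the `i`-th coordinate. -/
noncomputable def pderiv' {M : ℕ} (i : Fin M) (C : (Fin M → ℝ) → ℝ) : (Fin M → ℝ) → ℝ :=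
  fun θ => deriv (fun t => C (Function.update θ i t)) (θ i)

/-- The iterated mixed partial derivative `∂₁^{N 1} ⋯ ∂_M^{N M} C`. -/
noncomputable def pdMulti {M : ℕ} (N : Fin M → ℕ) (C : (Fin M → ℝ) → ℝ) : (Fin M → ℝ) → ℝ :=
  (List.finRange M).foldr (fun i f => (pderiv' i)^[N i] f) C

section Aux

open Real

lemma pascalSupport_even (m : ℕ) : pascalSupport (2*m+2) = {0, 1, -1} := by
  unfold pascalSupport
  rw [if_neg (by omega), if_neg (by omega), if_pos (by omega)]

lemma pascalSupport_odd (m : ℕ) : pascalSupport (2*m+3) = {1/2, -1/2, 3/2, -3/2} := by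
  unfold pascalSupport
  rw [if_neg (by omega), if_neg (by omega), if_neg (by omega)]

lemma pascalD_even (x : ℚ) (m : ℕ) : pascalD x (2*m+2) =
    (if x = 0 then (-1) ^ (m+1) * 2 ^ (2*m+1)
     else if x = 1 ∨ x = -1 then (-1) ^ m * 2 ^ (2*m)
     else 0) := by
  unfold pascalD
  rw [if_neg (by omega), if_neg (by omega), if_pos (by omega)]
  rw [show (2*m+2)/2 = m+1 by omega, show 2*m+2-1 = 2*m+1 by omega,
    show (2*m+2-2)/2 = m by omega, show 2*m+2-2 = 2*m by omega]

lemma pascalD_odd (x : ℚ) (m : ℕ) : pascalD x (2*m+3) =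
    (if x = 1/2 then (-1) ^ (m+1) * 3 * 2 ^ (2*m)
     else if x = -1/2 then -((-1) ^ (m+1) * 3 * 2 ^ (2*m))
     else if x = 3/2 then -((-1) ^ (m+1) * 2 ^ (2*m))
     else if x = -3/2 then (-1) ^ (m+1) * 2 ^ (2*m)
     else 0) := by
  unfold pascalD
  rw [if_neg (by omega), if_neg (by omega), if_neg (by omega)]
  rw [show (2*m+3-1)/2 = m+1 by omega, show 2*m+3-3 = 2*m by omega]

lemma pderiv_iter_slice {M : ℕ} (i : Fin M) (G : (Fin M → ℝ) → ℝ)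
    {θ : Fin M → ℝ} {a b c : ℝ}
    (h : ∀ t, G (Function.update θ i t) = a + b * Real.cos t + c * Real.sin t) :
    ∀ n t, (pderiv' i)^[n] G (Function.update θ i t)
      = (if n = 0 then a else 0) + b * Real.cos (t + n * (π/2)) + c * Real.sin (t + n * (π/2)) := by
  intro n
  induction n with
  | zero => intro t; simpa using h t
  | succ n ih =>
    intro t
    rw [Function.iterate_succ_apply']
    have h2 : HasDerivAt (fun s => (if n = 0 then a else 0) + b * Real.cos (s + n * (π/2))
          + c * Real.sin (s + n * (π/2)))
        (b * (-Real.sin (t + n * (π/2))) + c * Real.cos (t + n * (π/2))) t := by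
      have hc : HasDerivAt (fun s : ℝ => s + n * (π/2)) 1 t := (hasDerivAt_id t).add_const _
      have hcos : HasDerivAt (fun s => Real.cos (s + n * (π/2))) (-Real.sin (t + n*(π/2))) t := by
        exact ((Real.hasDerivAt_cos (t + n*(π/2))).comp t hc).congr_deriv (mul_one _)
      have hsin : HasDerivAt (fun s => Real.sin (s + n * (π/2))) (Real.cos (t + n*(π/2))) t := by
        exact ((Real.hasDerivAt_sin (t + n*(π/2))).comp t hc).congr_deriv (mul_one _)
      simpa [add_assoc] using
        ((hcos.const_mul b).add (hsin.const_mul c)).const_add (if n = 0 then a else 0)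
    have h1 : (fun s => (pderiv' i)^[n] G (Function.update (Function.update θ i t) i s))
        = fun s => (if n = 0 then a else 0) + b * Real.cos (s + n * (π/2))
            + c * Real.sin (s + n * (π/2)) := by
      funext s
      rw [Function.update_idem]
      exact ih s
    show deriv (fun s => (pderiv' i)^[n] G (Function.update (Function.update θ i t) i s))
        ((Function.update θ i t) i) = _
    rw [Function.update_self, h1, h2.deriv]
    have e1 : t + ((n:ℝ)+1) * (π/2) = (t + n * (π/2)) + π/2 := by ring
    push_cast
    rw [e1, Real.cos_add_pi_div_two, Real.sin_add_pi_div_two]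
    ring

lemma pderiv_iter_shift {M : ℕ} (i : Fin M) (G : (Fin M → ℝ) → ℝ)
    (h : ∀ θ : Fin M → ℝ, ∃ a b c : ℝ, ∀ t,
      G (Function.update θ i t) = a + b * Real.cos t + c * Real.sin t)
    (n : ℕ) (θ : Fin M → ℝ) :
    (pderiv' i)^[n] G θ = (1 / 2 ^ n) *
      ∑ x ∈ pascalSupport n,
        (pascalD x n : ℝ) * G (Function.update θ i (θ i + π * (x : ℝ))) := by
  obtain ⟨a, b, c, hb⟩ := h θ
  have lhs_eq := pderiv_iter_slice i G hb n (θ i)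
  rw [Function.update_eq_self] at lhs_eq
  rw [lhs_eq]
  simp only [hb]
  match n with
  | 0 =>
    norm_num [pascalSupport, pascalD]
  | 1 =>
    rw [show pascalSupport 1 = {1/2, -1/2} from rfl]
    rw [Finset.sum_insert (by norm_num), Finset.sum_singleton]
    have rh1 : θ i + π * (((1:ℚ)/2 : ℚ) : ℝ) = θ i + π/2 := by push_cast; ring
    have rh2 : θ i + π * (((-1:ℚ)/2 : ℚ) : ℝ) = θ i - π/2 := by push_cast; ring
    rw [show ((1:ℚ)/2 : ℚ) = 1/2 from rfl] at rh1
    rw [rh1, rh2, Real.cos_add_pi_div_two, Real.sin_add_pi_div_two,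
      Real.cos_sub_pi_div_two, Real.sin_sub_pi_div_two]
    have l1 : θ i + ((1:ℕ):ℝ) * (π/2) = θ i + π/2 := by push_cast; ring
    rw [l1, Real.cos_add_pi_div_two, Real.sin_add_pi_div_two]
    norm_num [pascalD]
    ring
  | (nn+2) =>
    rcases Nat.even_or_odd nn with ⟨m, rfl⟩ | ⟨m, rfl⟩
    · rw [show m + m + 2 = 2*m+2 from by ring]
      rw [pascalSupport_even]
      rw [Finset.sum_insert (by norm_num), Finset.sum_insert (by norm_num),
        Finset.sum_singleton]
      have r0 : θ i + π * ((0:ℚ):ℝ) = θ i := by norm_num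
      have r1 : θ i + π * ((1:ℚ):ℝ) = θ i + π := by norm_num
      have rm1 : θ i + π * ((-1:ℚ):ℝ) = θ i - π := by push_cast; ring
      rw [r0, r1, rm1, Real.cos_add_pi, Real.sin_add_pi, Real.cos_sub_pi, Real.sin_sub_pi]
      have l1 : θ i + ((2*m+2:ℕ):ℝ) * (π/2) = θ i + ((m+1:ℕ):ℝ) * π := by push_cast; ring
      rw [l1, Real.cos_add_nat_mul_pi, Real.sin_add_nat_mul_pi]
      rw [pascalD_even, pascalD_even, pascalD_even]
      norm_num
      field_simp
      ring
    · rw [show 2*m + 1 + 2 = 2*m+3 from by ring]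
      rw [pascalSupport_odd]
      rw [Finset.sum_insert (by norm_num), Finset.sum_insert (by norm_num),
        Finset.sum_insert (by norm_num), Finset.sum_singleton]
      have rh1 : θ i + π * ((1/2 : ℚ) : ℝ) = θ i + π/2 := by push_cast; ring
      have rh2 : θ i + π * ((-1/2 : ℚ) : ℝ) = θ i - π/2 := by push_cast; ring
      have rh3 : θ i + π * ((3/2 : ℚ) : ℝ) = (θ i + π/2) + π := by push_cast; ring
      have rh4 : θ i + π * ((-3/2 : ℚ) : ℝ) = (θ i - π/2) - π := by push_cast; ring
      rw [rh1, rh2, rh3, rh4, Real.cos_add_pi, Real.sin_add_pi, Real.cos_sub_pi,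
        Real.sin_sub_pi, Real.cos_add_pi_div_two, Real.sin_add_pi_div_two,
        Real.cos_sub_pi_div_two, Real.sin_sub_pi_div_two]
      have l1 : θ i + ((2*m+3:ℕ):ℝ) * (π/2) = (θ i + π/2) + ((m+1:ℕ):ℝ) * π := by
        push_cast; ring
      rw [l1, Real.cos_add_nat_mul_pi, Real.sin_add_nat_mul_pi,
        Real.cos_add_pi_div_two, Real.sin_add_pi_div_two]
      rw [pascalD_odd, pascalD_odd, pascalD_odd, pascalD_odd]
      norm_num
      field_simp
      ring

lemma sum_piFinset_update {M : ℕ} (t : Fin M → Finset ℚ) (i : Fin M) (s : Finset ℚ)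
    (hti : t i = {0}) (F : (Fin M → ℚ) → ℝ) :
    ∑ ω ∈ Fintype.piFinset (Function.update t i s), F ω
      = ∑ x ∈ s, ∑ ω ∈ Fintype.piFinset t, F (Function.update ω i x) := by
  rw [← Finset.sum_product' (s := s) (t := Fintype.piFinset t)
    (f := fun x ω => F (Function.update ω i x))]
  refine Finset.sum_nbij' (i := fun ω => ((ω i : ℚ), Function.update ω i 0))
    (j := fun p => Function.update p.2 i p.1) ?_ ?_ ?_ ?_ ?_
  · intro ω hω
    rw [Fintype.mem_piFinset] at hω
    rw [Finset.mem_product]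
    constructor
    · have := hω i; rwa [Function.update_self] at this
    · rw [Fintype.mem_piFinset]
      intro l
      rcases eq_or_ne l i with rfl | h
      · simp [hti]
      · have := hω l
        rw [Function.update_of_ne h] at this
        simpa [Function.update_of_ne h] using this
  · intro p hp
    rw [Finset.mem_product] at hp
    rw [Fintype.mem_piFinset]
    intro l
    rcases eq_or_ne l i with rfl | h
    · rw [Function.update_self, Function.update_self]; exact hp.1
    · rw [Function.update_of_ne h, Function.update_of_ne h]
      exact Fintype.mem_piFinset.mp hp.2 l
  · intro ω hω
    dsimp only
    rw [Function.update_idem, Function.update_eq_self]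
  · intro p hp
    rw [Finset.mem_product] at hp
    have h2 : p.2 i = 0 := by
      have := Fintype.mem_piFinset.mp hp.2 i
      rwa [hti, Finset.mem_singleton] at this
    ext l
    · simp
    · simp only [Function.update_idem, ← h2, Function.update_eq_self]
  · intro ω hω
    dsimp only
    rw [Function.update_idem, Function.update_eq_self]

lemma foldr_shift {M : ℕ} (C : (Fin M → ℝ) → ℝ)
    (htrig : ∀ (l : Fin M) (θ : Fin M → ℝ), ∃ a b c : ℝ, ∀ t : ℝ,
      C (Function.update θ l t) = a + b * Real.cos t + c * Real.sin t)
    (N : Fin M → ℕ) :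
    ∀ L : List (Fin M), L.Nodup → ∀ θ : Fin M → ℝ,
      (L.foldr (fun i f => (pderiv' i)^[N i] f) C) θ =
        (1 / 2 ^ (∑ l, (if l ∈ L then N l else 0))) *
          ∑ ω ∈ Fintype.piFinset (fun l => pascalSupport (if l ∈ L then N l else 0)),
            (∏ l, (pascalD (ω l) (if l ∈ L then N l else 0) : ℝ)) *
              C (θ + fun l => π * ((ω l : ℚ) : ℝ)) := by
  intro L
  induction L with
  | nil =>
    intro _ θ
    simp only [List.not_mem_nil, if_false, List.foldr_nil]
    rw [Finset.sum_const_zero]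
    have hpi : Fintype.piFinset (fun _ : Fin M => pascalSupport 0)
        = {fun _ : Fin M => (0:ℚ)} := by
      rw [show pascalSupport 0 = {(0:ℚ)} from by norm_num [pascalSupport]]
      exact Fintype.piFinset_singleton _
    rw [hpi, Finset.sum_singleton]
    have h1 : (∏ l : Fin M, (pascalD 0 0 : ℝ)) = 1 := by
      norm_num [pascalD]
    rw [h1]
    have h2 : (θ + fun _ : Fin M => π * (((0:ℚ)):ℝ)) = θ := by
      funext l; simp
    rw [h2]
    norm_num
  | cons i L' ih =>
    intro hnd θ
    rw [List.nodup_cons] at hnd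
    obtain ⟨hiL', hndL'⟩ := hnd
    have ihL' := ih hndL'
    have hGtrig : ∀ θ₀ : Fin M → ℝ, ∃ a b c : ℝ, ∀ t,
        (List.foldr (fun i f => (pderiv' i)^[N i] f) C L') (Function.update θ₀ i t)
          = a + b * Real.cos t + c * Real.sin t := by
      intro θ₀
      choose A B Cc hABC using fun (ω : Fin M → ℚ) =>
        htrig i (θ₀ + fun l => π * ((ω l : ℚ):ℝ))
      refine ⟨(1/2^(∑ l, if l ∈ L' then N l else 0) : ℝ) *
          ∑ ω ∈ Fintype.piFinset (fun l => pascalSupport (if l ∈ L' then N l else 0)),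
            (∏ l, (pascalD (ω l) (if l ∈ L' then N l else 0) : ℝ)) * A ω,
        (1/2^(∑ l, if l ∈ L' then N l else 0) : ℝ) *
          ∑ ω ∈ Fintype.piFinset (fun l => pascalSupport (if l ∈ L' then N l else 0)),
            (∏ l, (pascalD (ω l) (if l ∈ L' then N l else 0) : ℝ)) *
              (B ω * Real.cos (π * ((ω i : ℚ):ℝ)) + Cc ω * Real.sin (π * ((ω i : ℚ):ℝ))),
        (1/2^(∑ l, if l ∈ L' then N l else 0) : ℝ) *
          ∑ ω ∈ Fintype.piFinset (fun l => pascalSupport (if l ∈ L' then N l else 0)),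
            (∏ l, (pascalD (ω l) (if l ∈ L' then N l else 0) : ℝ)) *
              (Cc ω * Real.cos (π * ((ω i : ℚ):ℝ)) - B ω * Real.sin (π * ((ω i : ℚ):ℝ))), ?_⟩
      intro t
      rw [ihL' (Function.update θ₀ i t)]
      have harg : ∀ ω : Fin M → ℚ,
          (Function.update θ₀ i t + fun l => π * ((ω l : ℚ):ℝ))
            = Function.update (θ₀ + fun l => π * ((ω l : ℚ):ℝ)) i (t + π * ((ω i : ℚ):ℝ)) := by
        intro ω; funext l
        rcases eq_or_ne l i with rfl | h
        · simp
        · simp [Function.update_of_ne h]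
      rw [Finset.mul_sum, Finset.mul_sum, Finset.mul_sum, Finset.mul_sum]
      rw [Finset.sum_mul, Finset.sum_mul, ← Finset.sum_add_distrib,
        ← Finset.sum_add_distrib]
      refine Finset.sum_congr rfl fun ω _ => ?_
      rw [harg ω, hABC ω, Real.cos_add, Real.sin_add]
      ring
    rw [List.foldr_cons, pderiv_iter_shift i _ hGtrig (N i) θ]
    simp only [ihL']
    have hti : (fun l => pascalSupport (if l ∈ L' then N l else 0)) i = {0} := by
      simp [hiL']
      norm_num [pascalSupport]
    have hfun : (fun l => pascalSupport (if l ∈ (i :: L') then N l else 0))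
        = Function.update (fun l => pascalSupport (if l ∈ L' then N l else 0)) i
            (pascalSupport (N i)) := by
      funext l
      rcases eq_or_ne l i with rfl | h
      · simp
      · rw [Function.update_of_ne h]
        simp [List.mem_cons, h]
    rw [hfun, sum_piFinset_update _ i _ hti]
    have hsumN : (∑ l, if l ∈ (i :: L') then N l else 0)
        = N i + ∑ l, (if l ∈ L' then N l else 0) := by
      have h1 : ∀ l : Fin M, (if l ∈ (i :: L') then N l else 0)
          = Function.update (fun l => if l ∈ L' then N l else 0) i (N i) l := by
        intro l
        rcases eq_or_ne l i with rfl | h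
        · simp
        · rw [Function.update_of_ne h]
          simp [List.mem_cons, h]
      rw [Finset.sum_congr rfl (fun l _ => h1 l),
        Finset.sum_update_of_mem (Finset.mem_univ i)]
      congr 1
      rw [Finset.sdiff_singleton_eq_erase]
      rw [← Finset.add_sum_erase _ _ (Finset.mem_univ i), if_neg hiL', zero_add]
    simp only [Finset.mul_sum]
    refine Finset.sum_congr rfl fun x hx => ?_
    refine Finset.sum_congr rfl fun ω hω => ?_
    have hω0 : ω i = 0 := by
      have h := Fintype.mem_piFinset.mp hω i
      rw [if_neg hiL'] at h
      rw [show pascalSupport 0 = {(0:ℚ)} from by norm_num [pascalSupport]] at h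
      exact Finset.mem_singleton.mp h
    have hargeq : (Function.update θ i (θ i + π * (x:ℝ)) + fun l => π * ((ω l : ℚ):ℝ))
        = θ + fun l => π * (((Function.update ω i x) l : ℚ):ℝ) := by
      funext l
      rcases eq_or_ne l i with rfl | h
      · simp [hω0]
      · simp [Function.update_of_ne h]
    have hprod : (∏ l, (pascalD (Function.update ω i x l) (if l ∈ (i :: L') then N l else 0) : ℝ))
        = (pascalD x (N i) : ℝ) * ∏ l, (pascalD (ω l) (if l ∈ L' then N l else 0) : ℝ) := by
      rw [← Finset.mul_prod_erase Finset.univ _ (Finset.mem_univ i),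
        ← Finset.mul_prod_erase Finset.univ
          (fun l => (pascalD (ω l) (if l ∈ L' then N l else 0) : ℝ)) (Finset.mem_univ i)]
      rw [Function.update_self, if_pos (List.mem_cons_self (a := i) (l := L')), hω0, if_neg hiL']
      rw [show (pascalD 0 0 : ℝ) = 1 from by norm_num [pascalD], one_mul]
      congr 1
      refine Finset.prod_congr rfl fun l hl => ?_
      have hne : l ≠ i := (Finset.mem_erase.mp hl).1
      rw [Function.update_of_ne hne]
      congr 1
      simp [List.mem_cons, hne]
    rw [hargeq, hprod, hsumN, pow_add]
    ring

end Aux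

/-- Higher-order parameter shift formula (Eq. (12)): for a cost `C` of trigonometric form in
each coordinate and multiplicities `N`, the mixed partial derivative
`∂₁^{N(1)} ⋯ ∂_M^{N(M)} C(θ)` equals
`2^{−|α|} Σ_ω (Π_l d(ω(l), N(l))) C(θ + π ω)`, the sum running over all assignments `ω` of a
Pascal-tree shift to each coordinate. -/
theorem higher_order_parameter_shift {M : ℕ} (C : (Fin M → ℝ) → ℝ)
    (htrig : ∀ (l : Fin M) (θ : Fin M → ℝ), ∃ a b c : ℝ, ∀ t : ℝ,
      C (Function.update θ l t) = a + b * Real.cos t + c * Real.sin t)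
    (N : Fin M → ℕ) (θ : Fin M → ℝ) :
    pdMulti N C θ =
      (1 / 2 ^ (∑ l, N l)) *
        ∑ ω ∈ Fintype.piFinset (fun l => pascalSupport (N l)),
          (∏ l, (pascalD (ω l) (N l) : ℝ)) *
            C (θ + fun l => Real.pi * ((ω l : ℚ) : ℝ)) := by
  have h := foldr_shift C htrig N (List.finRange M) (List.nodup_finRange M) θ
  simp only [List.mem_finRange, if_true] at h
  exact h
end

section
/- (Eq. (13)) Under the hypotheses of the higher-order parameter shift formula — C : (Fin M → ℝ) → ℝ of trigonometric form a + b·cos t + c·sin t in each coordinate, multiplicities N : Fin M → ℕ with |α| = Σ_l N(l), and an additional coordinate i — the (|α|+1)-th order derivative satisfies ∂ᵢ( ∂₁^{N(1)} ⋯ ∂_M^{N(M)} C )(θ) = 2^{−|α|} · Σ_{ω} ( Π_l d(ω(l), N(l)) ) · ∂ᵢC(θ + π·ω), where the sum runs over all functions ω assigning to each l a shift in the support for N(l), and d are the Pascal-tree coefficients (d(0,0) = 1; d(±1/2,1) = ±1; for even N ≥ 2, d(0,N) = (−1)^{N/2}·2^{N−1}, d(±1,N) = (−1)^{(N−2)/2}·2^{N−2};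 for odd N ≥ 3, d(±1/2,N) = ±(−1)^{(N−1)/2}·3·2^{N−3}, d(±3/2,N) = ∓(−1)^{(N−1)/2}·2^{N−3}). -/
namespace PShift

open Real Function Finset

variable {M : ℕ}

/-- Trigonometric form in every coordinate. -/
def Trig (f : (Fin M → ℝ) → ℝ) : Prop :=
  ∀ (l : Fin M) (θ : Fin M → ℝ), ∃ a b c : ℝ, ∀ t : ℝ,
    f (Function.update θ l t) = a + b * Real.cos t + c * Real.sin t

lemma update_add (θ v : Fin M → ℝ) (l : Fin M) (t : ℝ) :
    Function.update θ l t + v = Function.update (θ + v) l (t + v l) := by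
  funext m
  by_cases h : m = l
  · subst h; simp
  · simp [Function.update_apply, h]

lemma single_add (θ : Fin M → ℝ) (l : Fin M) (x : ℝ) :
    θ + Pi.single l x = Function.update θ l (θ l + x) := by
  funext m
  by_cases h : m = l
  · subst h; simp
  · simp [Function.update_apply, Pi.single_apply, h]

lemma Trig.shift {f : (Fin M → ℝ) → ℝ} (hf : Trig f) (v : Fin M → ℝ) :
    Trig (fun θ => f (θ + v)) := by
  intro l θ
  obtain ⟨a, b, c, h⟩ := hf l (θ + v)
  refine ⟨a, b * Real.cos (v l) + c * Real.sin (v l),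
    c * Real.cos (v l) - b * Real.sin (v l), fun t => ?_⟩
  simp only [update_add, h (t + v l), Real.cos_add, Real.sin_add]
  ring

lemma Trig.combo {f g : (Fin M → ℝ) → ℝ} (hf : Trig f) (hg : Trig g) :
    Trig (fun θ => (f θ - g θ) / 2) := by
  intro l θ
  obtain ⟨a, b, c, h⟩ := hf l θ
  obtain ⟨a', b', c', h'⟩ := hg l θ
  refine ⟨(a - a') / 2, (b - b') / 2, (c - c') / 2, fun t => ?_⟩
  show (f (Function.update θ l t) - g (Function.update θ l t)) / 2 = _
  rw [h, h']; ring

lemma deriv_trig (a b c : ℝ) :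
    deriv (fun t => a + b * Real.cos t + c * Real.sin t)
      = fun t => 0 + c * Real.cos t + (-b) * Real.sin t := by
  funext t
  have h : HasDerivAt (fun t => a + b * Real.cos t + c * Real.sin t)
      (0 + c * Real.cos t + (-b) * Real.sin t) t := by
    have := ((hasDerivAt_const t a).add ((Real.hasDerivAt_cos t).const_mul b)).add
      ((Real.hasDerivAt_sin t).const_mul c)
    exact this.congr_deriv (by ring)
  exact h.deriv

lemma iter_deriv_trig (n : ℕ) (a b c : ℝ) :
    deriv^[n] (fun t => a + b * Real.cos t + c * Real.sin t)
      = fun t => (if n = 0 then a else 0)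
          + ((-1 : ℝ) ^ (n / 2) * (if n % 2 = 0 then b else c)) * Real.cos t
          + ((-1 : ℝ) ^ ((n + 1) / 2) * (if n % 2 = 0 then c else b)) * Real.sin t := by
  induction n generalizing a b c with
  | zero => funext t; simp
  | succ n ih =>
    rw [Function.iterate_succ_apply, deriv_trig, ih]
    funext t
    have hne : ¬(n + 1 = 0) := by omega
    rcases Nat.even_or_odd n with ⟨m, rfl⟩ | ⟨m, rfl⟩
    · have e1 : (m + m) / 2 = m := by omega
      have e2 : (m + m + 1) / 2 = m := by omega
      have e3 : (m + m + 1 + 1) / 2 = m + 1 := by omega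
      have e4 : (m + m) % 2 = 0 := by omega
      have e5 : ¬((m + m + 1) % 2 = 0) := by omega
      simp only [e1, e2, e3, e4, e5, hne, eq_self_iff_true, if_true, if_false, ite_self,
        ite_false, ite_true, pow_succ]
      ring
    · have e1 : (2 * m + 1) / 2 = m := by omega
      have e2 : (2 * m + 1 + 1) / 2 = m + 1 := by omega
      have e3 : (2 * m + 1 + 1 + 1) / 2 = m + 1 := by omega
      have e4 : ¬((2 * m + 1) % 2 = 0) := by omega
      have e5 : (2 * m + 1 + 1) % 2 = 0 := by omega
      simp only [e1, e2, e3, e4, e5, hne, eq_self_iff_true, if_true, if_false, ite_self,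
        ite_false, ite_true, pow_succ]
      ring


lemma Trig.pderiv_eq {f : (Fin M → ℝ) → ℝ} (hf : Trig f) (l : Fin M) :
    pderiv' l f = fun θ =>
      (f (θ + Pi.single l (π / 2)) - f (θ + Pi.single l (-(π / 2)))) / 2 := by
  funext θ
  obtain ⟨a, b, c, h⟩ := hf l θ
  have h1 : (fun t => f (Function.update θ l t))
      = fun t => a + Real.cos t * b + Real.sin t * c := by
    funext t; rw [h]; ring
  show deriv (fun t => f (Function.update θ l t)) (θ l) = _
  rw [single_add, single_add, h, h,
    show (fun t => f (Function.update θ l t)) = fun t => a + b * Real.cos t + c * Real.sin t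
      from funext h, deriv_trig]
  simp only [Real.cos_add, Real.sin_add, Real.cos_pi_div_two, Real.sin_pi_div_two]
  simp only [Real.cos_neg, Real.sin_neg, Real.cos_pi_div_two, Real.sin_pi_div_two]
  ring

lemma Trig.pderiv {f : (Fin M → ℝ) → ℝ} (hf : Trig f) (l : Fin M) :
    Trig (pderiv' l f) := by
  rw [hf.pderiv_eq l]
  exact (hf.shift _).combo (hf.shift _)

lemma Trig.iterate {f : (Fin M → ℝ) → ℝ} (hf : Trig f) (l : Fin M) (n : ℕ) :
    Trig ((pderiv' l)^[n] f) := by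
  induction n with
  | zero => exact hf
  | succ n ih => rw [Function.iterate_succ_apply']; exact ih.pderiv l

lemma iter_pderiv_apply {f : (Fin M → ℝ) → ℝ} (hf : Trig f) (l : Fin M) (n : ℕ)
    (θ : Fin M → ℝ) :
    (pderiv' l)^[n] f θ = deriv^[n] (fun t => f (Function.update θ l t)) (θ l) := by
  induction n generalizing f with
  | zero => simp
  | succ n ih =>
    rw [Function.iterate_succ_apply, ih (hf.pderiv l)]
    have h1 : (fun t => pderiv' l f (Function.update θ l t))
        = deriv (fun t => f (Function.update θ l t)) := by
      funext t
      show deriv (fun s => f (Function.update (Function.update θ l t) l s))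
        (Function.update θ l t l) = _
      simp [Function.update_idem]
    rw [h1, ← Function.iterate_succ_apply]


lemma key {f : (Fin M → ℝ) → ℝ} (hf : Trig f) (l : Fin M) (n : ℕ) (θ : Fin M → ℝ) :
    (pderiv' l)^[n] f θ
      = (1 / 2 ^ n) * ∑ ω ∈ pascalSupport n,
          (pascalD ω n : ℝ) * f (θ + Pi.single l (π * (ω : ℝ))) := by
  obtain ⟨a, b, c, h⟩ := hf l θ
  have hval : ∀ ω : ℚ, f (θ + Pi.single l (π * (ω : ℝ)))
      = a + b * Real.cos (θ l + π * (ω : ℝ)) + c * Real.sin (θ l + π * (ω : ℝ)) := by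
    intro ω; rw [single_add, h]
  rw [iter_pderiv_apply hf,
    show (fun t => f (Function.update θ l t)) = fun t => a + b * Real.cos t + c * Real.sin t
      from funext h, iter_deriv_trig]
  simp only [hval]
  match n with
  | 0 => norm_num [pascalSupport, pascalD]
  | 1 =>
    have hsup : pascalSupport 1 = {1/2, -1/2} := by norm_num [pascalSupport]
    have d1 : ((pascalD (1/2) 1 : ℤ) : ℝ) = 1 := by norm_num [pascalD]
    have d2 : ((pascalD (-1/2) 1 : ℤ) : ℝ) = -1 := by norm_num [pascalD]
    have B1 : θ l + π * ((1/2 : ℚ) : ℝ) = θ l + π / 2 := by push_cast; ring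
    have B2 : θ l + π * ((-1/2 : ℚ) : ℝ) = θ l - π / 2 := by push_cast; ring
    rw [hsup, Finset.sum_insert (by norm_num), Finset.sum_singleton, d1, d2, B1, B2]
    simp only [Real.cos_add, Real.sin_add, Real.cos_sub, Real.sin_sub,
      Real.cos_pi_div_two, Real.sin_pi_div_two]
    norm_num
    ring
  | Nat.succ (Nat.succ n) =>
    rcases Nat.even_or_odd n with ⟨m, rfl⟩ | ⟨m, rfl⟩
    · -- N = m + m + 2, even
      have c0 : ¬(m + m + 2 = 0) := by omega
      have c1 : ¬(m + m + 2 = 1) := by omega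
      have c2 : (m + m + 2) % 2 = 0 := by omega
      have c3 : (m + m + 2) / 2 = m + 1 := by omega
      have c4 : (m + m + 2 + 1) / 2 = m + 1 := by omega
      have c5 : m + m + 2 - 1 = m + m + 1 := by omega
      have c6 : m + m + 2 - 2 = m + m := by omega
      have c7 : (m + m + 2 - 2) / 2 = m := by omega
      have c8 : (m + m) / 2 = m := by omega
      have hsup : pascalSupport (m + m + 2) = {0, 1, -1} := by
        rw [pascalSupport, if_neg c0, if_neg c1, if_pos c2]
      have d0 : ((pascalD 0 (m + m + 2) : ℤ) : ℝ) = (-1) ^ (m + 1) * 2 ^ (m + m + 1) := by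
        rw [pascalD]; simp only [c0, c1, c2, c3, c5, if_false, if_true, eq_self_iff_true]
        norm_num
      have d1 : ((pascalD 1 (m + m + 2) : ℤ) : ℝ) = (-1) ^ m * 2 ^ (m + m) := by
        rw [pascalD]; simp only [c0, c1, c2, c6, c7, if_false, if_true, eq_self_iff_true]
        norm_num [c8]
      have d2 : ((pascalD (-1) (m + m + 2) : ℤ) : ℝ) = (-1) ^ m * 2 ^ (m + m) := by
        rw [pascalD]; simp only [c0, c1, c2, c6, c7, if_false, if_true, eq_self_iff_true]
        norm_num [c8]
      have B0 : θ l + π * ((0 : ℚ) : ℝ) = θ l := by push_cast; ring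
      have B1 : θ l + π * ((1 : ℚ) : ℝ) = θ l + π := by push_cast; ring
      have B2 : θ l + π * ((-1 : ℚ) : ℝ) = θ l - π := by push_cast; ring
      rw [hsup, Finset.sum_insert (by norm_num), Finset.sum_insert (by norm_num),
        Finset.sum_singleton, d0, d1, d2, B0, B1, B2]
      simp only [c0, c2, c3, c4, if_false, if_true, eq_self_iff_true, ite_false, ite_true,
        Real.cos_add, Real.sin_add, Real.cos_sub, Real.sin_sub, Real.cos_pi, Real.sin_pi]
      simp only [Nat.succ_eq_add_one]
      field_simp
      ring
    · -- N = 2m + 3, odd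
      have c0 : ¬(2 * m + 1 + 2 = 0) := by omega
      have c1 : ¬(2 * m + 1 + 2 = 1) := by omega
      have c2 : ¬((2 * m + 1 + 2) % 2 = 0) := by omega
      have c3 : (2 * m + 1 + 2) / 2 = m + 1 := by omega
      have c4 : (2 * m + 1 + 2 + 1) / 2 = m + 2 := by omega
      have c5 : (2 * m + 1 + 2 - 1) / 2 = m + 1 := by omega
      have c6 : 2 * m + 1 + 2 - 3 = 2 * m := by omega
      have hsup : pascalSupport (2 * m + 1 + 2) = {1/2, -1/2, 3/2, -3/2} := by
        rw [pascalSupport, if_neg c0, if_neg c1, if_neg c2]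
      have d1 : ((pascalD (1/2) (2 * m + 1 + 2) : ℤ) : ℝ)
          = (-1) ^ (m + 1) * 3 * 2 ^ (2 * m) := by
        rw [pascalD]; simp only [c0, c1, c2, c5, c6, if_false, if_true, eq_self_iff_true]
        norm_num
      have d2 : ((pascalD (-1/2) (2 * m + 1 + 2) : ℤ) : ℝ)
          = -((-1) ^ (m + 1) * 3 * 2 ^ (2 * m)) := by
        rw [pascalD]; simp only [c0, c1, c2, c5, c6, if_false, if_true, eq_self_iff_true]
        norm_num
      have d3 : ((pascalD (3/2) (2 * m + 1 + 2) : ℤ) : ℝ)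
          = -((-1) ^ (m + 1) * 2 ^ (2 * m)) := by
        rw [pascalD]; simp only [c0, c1, c2, c5, c6, if_false, if_true, eq_self_iff_true]
        norm_num
      have d4 : ((pascalD (-3/2) (2 * m + 1 + 2) : ℤ) : ℝ)
          = (-1) ^ (m + 1) * 2 ^ (2 * m) := by
        rw [pascalD]; simp only [c0, c1, c2, c5, c6, if_false, if_true, eq_self_iff_true]
        norm_num
      have B1 : θ l + π * ((1/2 : ℚ) : ℝ) = θ l + π / 2 := by push_cast; ring
      have B2 : θ l + π * ((-1/2 : ℚ) : ℝ) = θ l - π / 2 := by push_cast; ring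
      have B3 : θ l + π * ((3/2 : ℚ) : ℝ) = (θ l + π / 2) + π := by push_cast; ring
      have B4 : θ l + π * ((-3/2 : ℚ) : ℝ) = (θ l - π / 2) - π := by push_cast; ring
      rw [hsup, Finset.sum_insert (by norm_num), Finset.sum_insert (by norm_num),
        Finset.sum_insert (by norm_num), Finset.sum_singleton,
        d1, d2, d3, d4, B1, B2, B3, B4]
      simp only [c0, c2, c3, c4, if_false, if_true, eq_self_iff_true, ite_false, ite_true,
        Real.cos_add, Real.sin_add, Real.cos_sub, Real.sin_sub, Real.cos_pi, Real.sin_pi,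
        Real.cos_pi_div_two, Real.sin_pi_div_two]
      simp only [Nat.succ_eq_add_one]
      field_simp
      ring


lemma sum_piFinset_update {ι β γ : Type*} [Fintype ι] [DecidableEq ι] [DecidableEq β]
    [AddCommMonoid γ] (S : ι → Finset β) (a : ι) (z : β) (hz : S a = {z})
    (T : Finset β) (F : (ι → β) → γ) :
    ∑ ω ∈ Fintype.piFinset (Function.update S a T), F ω
      = ∑ x ∈ T, ∑ ω ∈ Fintype.piFinset S, F (Function.update ω a x) := by
  rw [← Finset.sum_product']
  refine Finset.sum_nbij' (fun ω => (ω a, Function.update ω a z))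
    (fun p => Function.update p.2 a p.1) ?_ ?_ ?_ ?_ ?_
  · intro ω hω
    rw [Fintype.mem_piFinset] at hω
    rw [Finset.mem_product]
    constructor
    · have := hω a; rwa [Function.update_self] at this
    · rw [Fintype.mem_piFinset]
      intro l
      by_cases hl : l = a
      · subst hl; simp [hz]
      · have := hω l
        rw [Function.update_apply, if_neg hl] at this
        show Function.update ω a z l ∈ S l
        rwa [Function.update_apply, if_neg hl]
  · intro p hp
    rw [Finset.mem_product] at hp
    rw [Fintype.mem_piFinset]
    intro l
    by_cases hl : l = a
    · subst hl; simp [hp.1]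
    · have := (Fintype.mem_piFinset.mp hp.2) l
      show Function.update p.2 a p.1 l ∈ Function.update S a T l
      rwa [Function.update_apply, if_neg hl, Function.update_apply, if_neg hl]
  · intro ω hω
    simp [Function.update_idem, Function.update_eq_self]
  · intro p hp
    rw [Finset.mem_product] at hp
    have h2 := (Fintype.mem_piFinset.mp hp.2) a
    rw [hz, Finset.mem_singleton] at h2
    ext
    · simp
    · simp only [Function.update_idem, ← h2, Function.update_eq_self]
  · intro ω hω
    simp [Function.update_eq_self]

lemma trig_foldr {f : (Fin M → ℝ) → ℝ} (hf : Trig f) (N : Fin M → ℕ)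
    (L : List (Fin M)) :
    Trig (L.foldr (fun i g => (pderiv' i)^[N i] g) f) := by
  induction L with
  | nil => exact hf
  | cons a L ih => exact ih.iterate a (N a)

lemma foldr_formula {f : (Fin M → ℝ) → ℝ} (hf : Trig f) (N : Fin M → ℕ)
    (L : List (Fin M)) (hL : L.Nodup) (θ : Fin M → ℝ) :
    L.foldr (fun i g => (pderiv' i)^[N i] g) f θ
      = (1 / 2 ^ (∑ l, if l ∈ L then N l else 0)) *
          ∑ ω ∈ Fintype.piFinset (fun l => pascalSupport (if l ∈ L then N l else 0)),
            (∏ l, (pascalD (ω l) (if l ∈ L then N l else 0) : ℝ)) *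
              f (θ + fun l => π * ((ω l : ℚ) : ℝ)) := by
  induction L generalizing θ with
  | nil =>
    simp only [List.not_mem_nil, if_false]
    have hpi : Fintype.piFinset (fun _ : Fin M => pascalSupport 0)
        = {fun _ => (0 : ℚ)} := by
      ext ω
      simp [Fintype.mem_piFinset, pascalSupport, funext_iff]
    rw [hpi, Finset.sum_singleton]
    have hθ : (θ + fun _ : Fin M => π * (((0 : ℚ) : ℚ) : ℝ)) = θ := by
      funext m; simp
    rw [hθ]
    simp [pascalD]
  | cons a L ih =>
    obtain ⟨ha, hL⟩ := List.nodup_cons.mp hL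
    set K : Fin M → ℕ := fun l => if l ∈ L then N l else 0 with hK
    have hKa : K a = 0 := by simp [hK, ha]
    have hcond : ∀ l, (if l ∈ a :: L then N l else 0) = Function.update K a (N a) l := by
      intro l
      by_cases hl : l = a
      · subst hl; simp [List.mem_cons]
      · simp [Function.update_apply, hl, List.mem_cons, hK]
    show (pderiv' a)^[N a] (L.foldr (fun i g => (pderiv' i)^[N i] g) f) θ = _
    rw [key (trig_foldr hf N L) a (N a) θ]
    simp only [hcond]
    -- rewrite the support family as an update
    have hsup : (fun l => pascalSupport (Function.update K a (N a) l))
        = Function.update (fun l => pascalSupport (K l)) a (pascalSupport (N a)) := by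
      funext l
      by_cases hl : l = a
      · subst hl; simp
      · simp [Function.update_apply, hl]
    rw [hsup, sum_piFinset_update (fun l => pascalSupport (K l)) a 0
      (by show pascalSupport (K a) = {0}; rw [hKa]; rfl) (pascalSupport (N a))]
    have hexp : (∑ l, Function.update K a (N a) l) = N a + ∑ l, K l := by
      rw [Finset.sum_update_of_mem (Finset.mem_univ a)]
      congr 1
      rw [show Finset.univ \ {a} = Finset.univ.erase a from by
        rw [Finset.sdiff_singleton_eq_erase], Finset.sum_erase _ hKa]
    rw [hexp]
    simp only [Finset.mul_sum]
    refine Finset.sum_congr rfl fun x hx => ?_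
    have ihx := ih hL (θ + Pi.single a (π * ((x : ℚ) : ℝ)))
    rw [ihx]
    simp only [Finset.mul_sum]
    refine Finset.sum_congr rfl fun ω hω => ?_
    have hωa : ω a = 0 := by
      have := (Fintype.mem_piFinset.mp hω) a
      rw [hKa] at this
      simpa [pascalSupport] using this
    have hprod : (∏ l, (pascalD (Function.update ω a x l) (Function.update K a (N a) l) : ℝ))
        = (pascalD x (N a) : ℝ) * ∏ l, (pascalD (ω l) (K l) : ℝ) := by
      have h1 : (fun l => (pascalD (Function.update ω a x l) (Function.update K a (N a) l) : ℝ))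
          = Function.update (fun l => (pascalD (ω l) (K l) : ℝ)) a ((pascalD x (N a) : ℝ)) := by
        funext l
        by_cases hl : l = a
        · subst hl; simp
        · simp [Function.update_apply, hl]
      rw [h1, Finset.prod_update_of_mem (Finset.mem_univ a)]
      congr 1
      rw [show Finset.univ \ {a} = Finset.univ.erase a from by
        rw [Finset.sdiff_singleton_eq_erase], Finset.prod_erase]
      rw [hωa, hKa]
      norm_num [pascalD]
    have hshift : (θ + Pi.single a (π * (x : ℝ)) + fun l => π * ((ω l : ℚ) : ℝ))
        = θ + fun l => π * ((Function.update ω a x l : ℚ) : ℝ) := by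
      funext m
      by_cases hm : m = a
      · subst hm; simp [hωa]
      · simp [Function.update_apply, hm, Pi.single_apply]
    rw [hprod, hshift, pow_add]
    ring
end PShift

/-- Eq. (13): the `(|α|+1)`-th order derivative `∂ᵢ(∂₁^{N(1)} ⋯ ∂_M^{N(M)} C)(θ)` equals
`2^{−|α|} Σ_ω (Π_l d(ω(l), N(l))) ∂ᵢC(θ + π ω)`. -/
theorem higher_order_derivative_as_shifted_gradients {M : ℕ} (C : (Fin M → ℝ) → ℝ)
    (htrig : ∀ (l : Fin M) (θ : Fin M → ℝ), ∃ a b c : ℝ, ∀ t : ℝ,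
      C (Function.update θ l t) = a + b * Real.cos t + c * Real.sin t)
    (N : Fin M → ℕ) (i : Fin M) (θ : Fin M → ℝ) :
    pderiv' i (pdMulti N C) θ =
      (1 / 2 ^ (∑ l, N l)) *
        ∑ ω ∈ Fintype.piFinset (fun l => pascalSupport (N l)),
          (∏ l, (pascalD (ω l) (N l) : ℝ)) *
            pderiv' i C (θ + fun l => Real.pi * ((ω l : ℚ) : ℝ)) := by
  have hC : PShift.Trig C := htrig
  have hform : ∀ ψ : Fin M → ℝ, pdMulti N C ψ
      = (1 / 2 ^ (∑ l, N l)) * ∑ ω ∈ Fintype.piFinset (fun l => pascalSupport (N l)),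
          (∏ l, (pascalD (ω l) (N l) : ℝ)) * C (ψ + fun l => Real.pi * ((ω l : ℚ) : ℝ)) := by
    intro ψ
    have h := PShift.foldr_formula hC N (List.finRange M) (List.nodup_finRange M) ψ
    simpa only [pdMulti, List.mem_finRange, if_true] using h
  show deriv (fun t => pdMulti N C (Function.update θ i t)) (θ i) = _
  have h1 : (fun t => pdMulti N C (Function.update θ i t))
      = fun t => (1 / 2 ^ (∑ l, N l)) *
          ∑ ω ∈ Fintype.piFinset (fun l => pascalSupport (N l)),
            (∏ l, (pascalD (ω l) (N l) : ℝ)) *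
              C (Function.update θ i t + fun l => Real.pi * ((ω l : ℚ) : ℝ)) :=
    funext fun t => hform _
  have hupd : ∀ (ω : Fin M → ℚ) (t : ℝ),
      (Function.update θ i t + fun l => Real.pi * ((ω l : ℚ) : ℝ))
        = Function.update (θ + fun l => Real.pi * ((ω l : ℚ) : ℝ)) i
            (t + Real.pi * ((ω i : ℚ) : ℝ)) := by
    intro ω t
    exact PShift.update_add θ _ i t
  have hdiff : ∀ ω ∈ Fintype.piFinset (fun l => pascalSupport (N l)),
      DifferentiableAt ℝ (fun t => (∏ l, (pascalD (ω l) (N l) : ℝ)) *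
        C (Function.update θ i t + fun l => Real.pi * ((ω l : ℚ) : ℝ))) (θ i) := by
    intro ω _
    apply DifferentiableAt.const_mul
    obtain ⟨a, b, c, h⟩ := hC i (θ + fun l => Real.pi * ((ω l : ℚ) : ℝ))
    have h2 : (fun t => C (Function.update θ i t + fun l => Real.pi * ((ω l : ℚ) : ℝ)))
        = fun t => a + b * Real.cos (t + Real.pi * ((ω i : ℚ) : ℝ))
            + c * Real.sin (t + Real.pi * ((ω i : ℚ) : ℝ)) := by
      funext t; rw [hupd ω t, h]
    rw [h2]
    have : Differentiable ℝ (fun t : ℝ => a + b * Real.cos (t + Real.pi * ((ω i : ℚ) : ℝ))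
        + c * Real.sin (t + Real.pi * ((ω i : ℚ) : ℝ))) := by
      apply Differentiable.add
      apply Differentiable.add
      · exact differentiable_const a
      · exact (Real.differentiable_cos.comp (differentiable_id.add_const _)).const_mul b
      · exact (Real.differentiable_sin.comp (differentiable_id.add_const _)).const_mul c
    exact this.differentiableAt
  rw [h1, deriv_const_mul_field]
  congr 1
  rw [deriv_fun_sum hdiff]
  refine Finset.sum_congr rfl fun ω hω => ?_
  rw [deriv_const_mul_field]
  congr 1
  have h2 : (fun t => C (Function.update θ i t + fun l => Real.pi * ((ω l : ℚ) : ℝ)))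
      = fun t => C (Function.update (θ + fun l => Real.pi * ((ω l : ℚ) : ℝ)) i
          (t + Real.pi * ((ω i : ℚ) : ℝ))) := by
    funext t; rw [hupd ω t]
  rw [h2, deriv_comp_add_const
    (fun s => C (Function.update (θ + fun l => Real.pi * ((ω l : ℚ) : ℝ)) i s))
    (Real.pi * ((ω i : ℚ) : ℝ)) (θ i)]
  rfl
end

section
/- (Eq. (16)) Under the hypotheses of the higher-order parameter shift formula — C : (Fin M → ℝ) → ℝ of trigonometric form a + b·cos t + c·sin t in each coordinate, multiplicities N : Fin M → ℕ with |α| = Σ_l N(l), and a coordinate i — the magnitude of the (|α|+1)-th order derivative satisfies the bound |∂ᵢ( ∂₁^{N(1)} ⋯ ∂_M^{N(M)} C )(θ)| ≤ 2^{−|α|} · Σ_{ω} ( Π_l |d(ω(l), N(l))| ) · |∂ᵢC(θ + π·ω)|, where the sum runs over all functions ω assigning to each l a shift in the support for N(l), and d are the Pascal-tree coefficients (d(0,0) = 1; d(±1/2,1) = ±1; for even N ≥ 2, d(0,N) = (−1)^{N/2}·2^{N−1}, d(±1,N) = (−1)^{(N−2)/2}·2^{N−2}; for odd N ≥ 3,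 d(±1/2,N) = ±(−1)^{(N−1)/2}·3·2^{N−3}, d(±3/2,N) = ∓(−1)^{(N−1)/2}·2^{N−3}). -/
def IsTrig {M : ℕ} (C : (Fin M → ℝ) → ℝ) : Prop :=
  ∀ (l : Fin M) (θ : Fin M → ℝ), ∃ a b c : ℝ, ∀ t : ℝ,
    C (Function.update θ l t) = a + b * Real.cos t + c * Real.sin t

theorem hasDerivAt_trig (a b c : ℝ) (t : ℝ) :
    HasDerivAt (fun t => a + b * Real.cos t + c * Real.sin t)
      (c * Real.cos t - b * Real.sin t) t := by
  have h := (((hasDerivAt_const t a).add ((Real.hasDerivAt_cos t).const_mul b)).add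
    ((Real.hasDerivAt_sin t).const_mul c))
  exact h.congr_deriv (by ring)

theorem deriv_trig (a b c : ℝ) (g : ℝ → ℝ)
    (hg : ∀ t, g t = a + b * Real.cos t + c * Real.sin t) (t : ℝ) :
    deriv g t = c * Real.cos t - b * Real.sin t := by
  have : g = fun t => a + b * Real.cos t + c * Real.sin t := funext hg
  rw [this, (hasDerivAt_trig a b c t).deriv]

noncomputable def rotB (b c : ℝ) (n : ℕ) : ℝ :=
  if n % 4 = 0 then b else if n % 4 = 1 then c else if n % 4 = 2 then -b else -c

noncomputable def rotC (b c : ℝ) (n : ℕ) : ℝ :=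
  if n % 4 = 0 then c else if n % 4 = 1 then -b else if n % 4 = 2 then -c else b


theorem rotB_succ (b c : ℝ) (n : ℕ) : rotB b c (n + 1) = rotC b c n := by
  have h : n % 4 = 0 ∨ n % 4 = 1 ∨ n % 4 = 2 ∨ n % 4 = 3 := by omega
  rcases h with h | h | h | h <;>
    · have h' : (n+1) % 4 = (n % 4 + 1) % 4 := by omega
      simp [rotB, rotC, h', h]

theorem rotC_succ (b c : ℝ) (n : ℕ) : rotC b c (n + 1) = -rotB b c n := by
  have h : n % 4 = 0 ∨ n % 4 = 1 ∨ n % 4 = 2 ∨ n % 4 = 3 := by omega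
  rcases h with h | h | h | h <;>
    · have h' : (n+1) % 4 = (n % 4 + 1) % 4 := by omega
      simp [rotB, rotC, h', h]

theorem iter_deriv_trig (a b c : ℝ) (g : ℝ → ℝ)
    (hg : ∀ t, g t = a + b * Real.cos t + c * Real.sin t) (n : ℕ) (t : ℝ) :
    deriv^[n] g t = (if n = 0 then a else 0) + rotB b c n * Real.cos t
      + rotC b c n * Real.sin t := by
  induction n generalizing t with
  | zero => simpa [rotB, rotC] using hg t
  | succ n ih =>
    rw [Function.iterate_succ_apply']
    have hd := deriv_trig (if n = 0 then a else 0) (rotB b c n) (rotC b c n)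
      (deriv^[n] g) ih t
    rw [hd, rotB_succ, rotC_succ]
    simp
    ring

theorem rotB_even (b c : ℝ) (k : ℕ) : rotB b c (k + k + 2) = (-1) ^ (k + 1) * b := by
  rcases Nat.even_or_odd k with ⟨j, rfl⟩ | ⟨j, rfl⟩
  · have h4 : (j + j + (j + j) + 2) % 4 = 2 := by omega
    rw [rotB, if_neg (by omega), if_neg (by omega), if_pos h4,
      Odd.neg_one_pow ⟨j, by ring⟩]
    ring
  · have h4 : (2 * j + 1 + (2 * j + 1) + 2) % 4 = 0 := by omega
    rw [rotB, if_pos h4, Even.neg_one_pow ⟨j + 1, by ring⟩]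
    ring

theorem rotC_even (b c : ℝ) (k : ℕ) : rotC b c (k + k + 2) = (-1) ^ (k + 1) * c := by
  rcases Nat.even_or_odd k with ⟨j, rfl⟩ | ⟨j, rfl⟩
  · have h4 : (j + j + (j + j) + 2) % 4 = 2 := by omega
    rw [rotC, if_neg (by omega), if_neg (by omega), if_pos h4,
      Odd.neg_one_pow ⟨j, by ring⟩]
    ring
  · have h4 : (2 * j + 1 + (2 * j + 1) + 2) % 4 = 0 := by omega
    rw [rotC, if_pos h4, Even.neg_one_pow ⟨j + 1, by ring⟩]
    ring

theorem rotB_odd (b c : ℝ) (k : ℕ) : rotB b c (k + k + 3) = (-1) ^ (k + 1) * c := by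
  rcases Nat.even_or_odd k with ⟨j, rfl⟩ | ⟨j, rfl⟩
  · have h4 : (j + j + (j + j) + 3) % 4 = 3 := by omega
    rw [rotB, if_neg (by omega), if_neg (by omega), if_neg (by omega),
      Odd.neg_one_pow ⟨j, by ring⟩]
    ring
  · have h4 : (2 * j + 1 + (2 * j + 1) + 3) % 4 = 1 := by omega
    rw [rotB, if_neg (by omega), if_pos h4, Even.neg_one_pow ⟨j + 1, by ring⟩]
    ring

theorem rotC_odd (b c : ℝ) (k : ℕ) : rotC b c (k + k + 3) = -((-1) ^ (k + 1) * b) := by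
  rcases Nat.even_or_odd k with ⟨j, rfl⟩ | ⟨j, rfl⟩
  · have h4 : (j + j + (j + j) + 3) % 4 = 3 := by omega
    rw [rotC, if_neg (by omega), if_neg (by omega), if_neg (by omega),
      Odd.neg_one_pow ⟨j, by ring⟩]
    ring
  · have h4 : (2 * j + 1 + (2 * j + 1) + 3) % 4 = 1 := by omega
    rw [rotC, if_neg (by omega), if_pos h4, Even.neg_one_pow ⟨j + 1, by ring⟩]
    ring

theorem pascalD_even0 (k : ℕ) : (pascalD 0 (k + k + 2) : ℝ) = (-1) ^ (k + 1) * 2 ^ (k + k + 1) := by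
  unfold pascalD
  rw [if_neg (by omega), if_neg (by omega), if_pos (by omega : (k+k+2) % 2 = 0), if_pos rfl]
  rw [show (k+k+2)/2 = k+1 from by omega, show k+k+2-1 = k+k+1 from by omega]
  push_cast; ring

theorem pascalD_even1 (k : ℕ) : (pascalD 1 (k + k + 2) : ℝ) = (-1) ^ k * 2 ^ (k + k) := by
  unfold pascalD
  rw [if_neg (by omega), if_neg (by omega), if_pos (by omega : (k+k+2) % 2 = 0), if_neg (by norm_num), if_pos (Or.inl rfl)]
  rw [show (k+k+2-2)/2 = k from by omega, show k+k+2-2 = k+k from by omega]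
  push_cast; ring

theorem pascalD_evenm1 (k : ℕ) : (pascalD (-1) (k + k + 2) : ℝ) = (-1) ^ k * 2 ^ (k + k) := by
  unfold pascalD
  rw [if_neg (by omega), if_neg (by omega), if_pos (by omega : (k+k+2) % 2 = 0), if_neg (by norm_num), if_pos (Or.inr rfl)]
  rw [show (k+k+2-2)/2 = k from by omega, show k+k+2-2 = k+k from by omega]
  push_cast; ring

theorem pascalD_oddh (k : ℕ) : (pascalD (1/2) (k + k + 3) : ℝ) = (-1) ^ (k + 1) * 3 * 2 ^ (k + k) := by
  unfold pascalD
  rw [if_neg (by omega), if_neg (by omega), if_neg (by omega : ¬ (k+k+3) % 2 = 0), if_pos rfl]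
  rw [show (k+k+3-1)/2 = k+1 from by omega, show k+k+3-3 = k+k from by omega]
  push_cast; ring

theorem pascalD_oddmh (k : ℕ) : (pascalD (-1/2) (k + k + 3) : ℝ) = -((-1) ^ (k + 1) * 3 * 2 ^ (k + k)) := by
  unfold pascalD
  rw [if_neg (by omega), if_neg (by omega), if_neg (by omega : ¬ (k+k+3) % 2 = 0), if_neg (by norm_num), if_pos (by norm_num)]
  rw [show (k+k+3-1)/2 = k+1 from by omega, show k+k+3-3 = k+k from by omega]
  push_cast; ring

theorem pascalD_odd3h (k : ℕ) : (pascalD (3/2) (k + k + 3) : ℝ) = -((-1) ^ (k + 1) * 2 ^ (k + k)) := by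
  unfold pascalD
  rw [if_neg (by omega), if_neg (by omega), if_neg (by omega : ¬ (k+k+3) % 2 = 0), if_neg (by norm_num), if_neg (by norm_num), if_pos rfl]
  rw [show (k+k+3-1)/2 = k+1 from by omega, show k+k+3-3 = k+k from by omega]
  push_cast; ring

theorem pascalD_oddm3h (k : ℕ) : (pascalD (-3/2) (k + k + 3) : ℝ) = (-1) ^ (k + 1) * 2 ^ (k + k) := by
  unfold pascalD
  rw [if_neg (by omega), if_neg (by omega), if_neg (by omega : ¬ (k+k+3) % 2 = 0), if_neg (by norm_num), if_neg (by norm_num), if_neg (by norm_num), if_pos (by norm_num)]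
  rw [show (k+k+3-1)/2 = k+1 from by omega, show k+k+3-3 = k+k from by omega]
  push_cast; ring

theorem trig_shift_sum (a b c : ℝ) (g : ℝ → ℝ)
    (hg : ∀ t, g t = a + b * Real.cos t + c * Real.sin t) (n : ℕ) (t : ℝ) :
    deriv^[n] g t = (1 / 2 ^ n : ℝ) *
      ∑ ω ∈ pascalSupport n, (pascalD ω n : ℝ) * g (t + Real.pi * ((ω : ℚ) : ℝ)) := by
  have key : ∀ x : ℝ, g (t + Real.pi * x) =
      a + (b * Real.cos (Real.pi * x) + c * Real.sin (Real.pi * x)) * Real.cos t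
        + (c * Real.cos (Real.pi * x) - b * Real.sin (Real.pi * x)) * Real.sin t := by
    intro x
    rw [hg, Real.cos_add, Real.sin_add]
    ring
  rw [iter_deriv_trig a b c g hg n t]
  have ch : Real.cos (Real.pi * (1/2 : ℝ)) = 0 := by
    rw [show Real.pi * (1/2 : ℝ) = Real.pi/2 by ring, Real.cos_pi_div_two]
  have sh : Real.sin (Real.pi * (1/2 : ℝ)) = 1 := by
    rw [show Real.pi * (1/2 : ℝ) = Real.pi/2 by ring, Real.sin_pi_div_two]
  have cmh : Real.cos (Real.pi * (-(1/2) : ℝ)) = 0 := by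
    rw [show Real.pi * (-(1/2) : ℝ) = -(Real.pi/2) by ring, Real.cos_neg, Real.cos_pi_div_two]
  have smh : Real.sin (Real.pi * (-(1/2) : ℝ)) = -1 := by
    rw [show Real.pi * (-(1/2) : ℝ) = -(Real.pi/2) by ring, Real.sin_neg, Real.sin_pi_div_two]
  match n with
  | 0 =>
    simp [pascalSupport, pascalD, rotB, rotC, key]
  | 1 =>
    have hsup : pascalSupport 1 = {1/2, -1/2} := by simp [pascalSupport]
    rw [hsup, Finset.sum_insert (by norm_num), Finset.sum_singleton]
    simp only [key]
    rw [show ((1/2 : ℚ) : ℝ) = 1/2 by norm_num, show ((-1/2 : ℚ) : ℝ) = -(1/2) by norm_num,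
      ch, sh, cmh, smh]
    have h1 : (pascalD (1/2) 1 : ℝ) = 1 := by norm_num [pascalD]
    have h2 : (pascalD (-1/2) 1 : ℝ) = -1 := by norm_num [pascalD]
    rw [h1, h2, rotB, rotC]
    norm_num
    ring
  | (m + 2) =>
    rcases Nat.even_or_odd m with ⟨k, rfl⟩ | ⟨k, rfl⟩
    · -- n = k + k + 2
      have hsup : pascalSupport (k + k + 2) = {0, 1, -1} := by
        rw [pascalSupport, if_neg (by omega), if_neg (by omega), if_pos (by omega)]
      rw [hsup, Finset.sum_insert (by norm_num), Finset.sum_insert (by norm_num),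
        Finset.sum_singleton, pascalD_even0, pascalD_even1, pascalD_evenm1]
      simp only [key]
      rw [show ((0 : ℚ) : ℝ) = 0 by norm_num, show ((1 : ℚ) : ℝ) = 1 by norm_num,
        show ((-1 : ℚ) : ℝ) = -1 by norm_num]
      rw [show Real.cos (Real.pi * (0:ℝ)) = 1 by norm_num,
        show Real.sin (Real.pi * (0:ℝ)) = 0 by norm_num,
        show Real.cos (Real.pi * (1:ℝ)) = -1 by rw [mul_one, Real.cos_pi],
        show Real.sin (Real.pi * (1:ℝ)) = 0 by rw [mul_one, Real.sin_pi],
        show Real.cos (Real.pi * (-1:ℝ)) = -1 by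
          rw [show Real.pi * (-1:ℝ) = -Real.pi by ring, Real.cos_neg, Real.cos_pi],
        show Real.sin (Real.pi * (-1:ℝ)) = 0 by
          rw [show Real.pi * (-1:ℝ) = -Real.pi by ring, Real.sin_neg, Real.sin_pi]; norm_num]
      rw [rotB_even, rotC_even, if_neg (by omega : ¬ (k + k + 2 = 0))]
      rw [show ((-1:ℝ))^(k+1) = -(-1:ℝ)^k by rw [pow_succ]; ring]
      rw [show (2:ℝ)^(k+k+2) = 2^(k+k) * 2 * 2 by rw [pow_succ, pow_succ],
        show (2:ℝ)^(k+k+1) = 2^(k+k) * 2 by rw [pow_succ]]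
      have hne : (2:ℝ)^(k+k) ≠ 0 := by positivity
      field_simp
      ring
    · -- n = 2k+1+2 = k+k+3
      have hn : 2 * k + 1 + 2 = k + k + 3 := by omega
      rw [hn]
      have hsup : pascalSupport (k + k + 3) = {1/2, -1/2, 3/2, -3/2} := by
        rw [pascalSupport, if_neg (by omega), if_neg (by omega), if_neg (by omega)]
      rw [hsup, Finset.sum_insert (by norm_num), Finset.sum_insert (by norm_num),
        Finset.sum_insert (by norm_num), Finset.sum_singleton,
        pascalD_oddh, pascalD_oddmh, pascalD_odd3h, pascalD_oddm3h]
      simp only [key]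
      rw [show ((1/2 : ℚ) : ℝ) = 1/2 by norm_num, show ((-1/2 : ℚ) : ℝ) = -(1/2) by norm_num,
        show ((3/2 : ℚ) : ℝ) = 3/2 by norm_num, show ((-3/2 : ℚ) : ℝ) = -(3/2) by norm_num,
        ch, sh, cmh, smh]
      rw [show Real.cos (Real.pi * (3/2:ℝ)) = 0 by
            rw [show Real.pi * (3/2:ℝ) = Real.pi + Real.pi/2 by ring, Real.cos_add]
            simp,
          show Real.sin (Real.pi * (3/2:ℝ)) = -1 by
            rw [show Real.pi * (3/2:ℝ) = Real.pi + Real.pi/2 by ring, Real.sin_add]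
            simp,
          show Real.cos (Real.pi * (-(3/2):ℝ)) = 0 by
            rw [show Real.pi * (-(3/2):ℝ) = -(Real.pi + Real.pi/2) by ring, Real.cos_neg,
              Real.cos_add]
            simp,
          show Real.sin (Real.pi * (-(3/2):ℝ)) = 1 by
            rw [show Real.pi * (-(3/2):ℝ) = -(Real.pi + Real.pi/2) by ring, Real.sin_neg,
              Real.sin_add]
            simp]
      rw [rotB_odd, rotC_odd, if_neg (by omega : ¬ (k + k + 3 = 0))]
      rw [show ((-1:ℝ))^(k+1) = -(-1:ℝ)^k by rw [pow_succ]; ring]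
      rw [show (2:ℝ)^(k+k+3) = 2^(k+k) * 2 * 2 * 2 by rw [pow_succ, pow_succ, pow_succ]]
      have hne : (2:ℝ)^(k+k) ≠ 0 := by positivity
      field_simp
      ring

theorem pderiv'_update {M : ℕ} (C : (Fin M → ℝ) → ℝ) (j : Fin M) (θ : Fin M → ℝ) :
    (fun t => pderiv' j C (Function.update θ j t)) =
      deriv (fun t => C (Function.update θ j t)) := by
  funext t
  simp only [pderiv', Function.update_idem, Function.update_self]

theorem pderiv'_iterate {M : ℕ} (C : (Fin M → ℝ) → ℝ) (j : Fin M) (n : ℕ) (θ : Fin M → ℝ) :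
    (pderiv' j)^[n] C θ = deriv^[n] (fun t => C (Function.update θ j t)) (θ j) := by
  induction n generalizing C with
  | zero => simp [Function.update_eq_self]
  | succ n ih =>
    rw [Function.iterate_succ_apply, ih (pderiv' j C), pderiv'_update,
      ← Function.iterate_succ_apply]

theorem pderiv'_shift {M : ℕ} {C : (Fin M → ℝ) → ℝ} (hC : IsTrig C) (j : Fin M)
    (θ : Fin M → ℝ) :
    pderiv' j C θ = (1/2) * (C (Function.update θ j (θ j + Real.pi/2))
      - C (Function.update θ j (θ j - Real.pi/2))) := by
  obtain ⟨a, b, c, hg⟩ := hC j θ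
  have h1 : pderiv' j C θ = c * Real.cos (θ j) - b * Real.sin (θ j) := by
    simp only [pderiv']
    exact deriv_trig a b c _ hg (θ j)
  rw [h1, hg, hg, Real.cos_add_pi_div_two, Real.sin_add_pi_div_two,
    Real.cos_sub_pi_div_two, Real.sin_sub_pi_div_two]
  ring

theorem isTrig_pderiv' {M : ℕ} {C : (Fin M → ℝ) → ℝ} (hC : IsTrig C) (j : Fin M) :
    IsTrig (pderiv' j C) := by
  intro l θ
  by_cases hlj : l = j
  · subst hlj
    obtain ⟨a, b, c, hg⟩ := hC l θ
    refine ⟨0, c, -b, fun t => ?_⟩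
    rw [congrFun (pderiv'_update C l θ) t, deriv_trig a b c _ hg t]
    ring
  · obtain ⟨a₁, b₁, c₁, h₁⟩ := hC l (Function.update θ j (θ j + Real.pi/2))
    obtain ⟨a₂, b₂, c₂, h₂⟩ := hC l (Function.update θ j (θ j - Real.pi/2))
    refine ⟨(a₁ - a₂)/2, (b₁ - b₂)/2, (c₁ - c₂)/2, fun t => ?_⟩
    rw [pderiv'_shift hC j (Function.update θ l t),
      Function.update_of_ne (Ne.symm hlj) t θ,
      Function.update_comm hlj, Function.update_comm hlj, h₁ t, h₂ t]
    ring

theorem isTrig_iterate {M : ℕ} {C : (Fin M → ℝ) → ℝ} (hC : IsTrig C) (j : Fin M) (n : ℕ) :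
    IsTrig ((pderiv' j)^[n] C) := by
  induction n with
  | zero => exact hC
  | succ n ih => rw [Function.iterate_succ_apply']; exact isTrig_pderiv' ih j

theorem pderiv'_iter_formula {M : ℕ} {C : (Fin M → ℝ) → ℝ} (hC : IsTrig C) (j : Fin M)
    (n : ℕ) (θ : Fin M → ℝ) :
    (pderiv' j)^[n] C θ = (1 / 2 ^ n) * ∑ x ∈ pascalSupport n,
      (pascalD x n : ℝ) * C (Function.update θ j (θ j + Real.pi * ((x : ℚ) : ℝ))) := by
  obtain ⟨a, b, c, hg⟩ := hC j θ
  rw [pderiv'_iterate, trig_shift_sum a b c _ hg n (θ j)]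

theorem isTrig_foldr {M : ℕ} {C : (Fin M → ℝ) → ℝ} (hC : IsTrig C) (N : Fin M → ℕ)
    (L : List (Fin M)) : IsTrig (L.foldr (fun i f => (pderiv' i)^[N i] f) C) := by
  induction L with
  | nil => exact hC
  | cons j L ih => exact isTrig_iterate ih j (N j)

theorem foldr_congr {M : ℕ} (C : (Fin M → ℝ) → ℝ) (N N' : Fin M → ℕ) (L : List (Fin M))
    (h : ∀ l ∈ L, N l = N' l) :
    L.foldr (fun i f => (pderiv' i)^[N i] f) C = L.foldr (fun i f => (pderiv' i)^[N' i] f) C := by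
  induction L with
  | nil => rfl
  | cons j L ih =>
    rw [List.foldr_cons, List.foldr_cons, ih (fun l hl => h l (List.mem_cons_of_mem j hl)),
      h j List.mem_cons_self]

theorem shift_main {M : ℕ} (L : List (Fin M)) (hL : L.Nodup) (N : Fin M → ℕ)
    (hN : ∀ l, l ∉ L → N l = 0) (C : (Fin M → ℝ) → ℝ) (hC : IsTrig C) (θ : Fin M → ℝ) :
    (L.foldr (fun i f => (pderiv' i)^[N i] f) C) θ
      = (1 / 2 ^ (∑ l, N l)) *
          ∑ ω ∈ Fintype.piFinset (fun l => pascalSupport (N l)),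
            (∏ l, ((pascalD (ω l) (N l) : ℝ))) *
              C (θ + fun l => Real.pi * ((ω l : ℚ) : ℝ)) := by
  induction L generalizing N θ with
  | nil =>
    have hN0 : ∀ l, N l = 0 := fun l => hN l (fun h => List.not_mem_nil h)
    have hsum : (∑ l, N l) = 0 := Finset.sum_eq_zero fun l _ => hN0 l
    have hpi : Fintype.piFinset (fun l : Fin M => pascalSupport (N l)) = {fun _ => 0} := by
      ext f
      simp [Fintype.mem_piFinset, hN0, pascalSupport, funext_iff]
    rw [List.foldr_nil, hsum, hpi, Finset.sum_singleton]
    have h1 : ∀ l : Fin M, (pascalD ((fun _ : Fin M => (0:ℚ)) l) (N l) : ℝ) = 1 := by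
      intro l; rw [hN0 l]; norm_num [pascalD]
    rw [Finset.prod_congr rfl (fun l _ => h1 l), Finset.prod_const_one]
    have h2 : (θ + fun l : Fin M => Real.pi * (((fun _ : Fin M => (0:ℚ)) l : ℚ) : ℝ)) = θ := by
      funext l; simp
    rw [h2]
    norm_num
  | cons jj L ih =>
    have hj : jj ∉ L := (List.nodup_cons.mp hL).1
    have hL' : L.Nodup := (List.nodup_cons.mp hL).2
    set N' : Fin M → ℕ := Function.update N jj 0 with hN'def
    have hN'L : ∀ l, l ∉ L → N' l = 0 := by
      intro l hl
      by_cases hlj : l = jj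
      · subst hlj; simp [hN'def]
      · rw [hN'def, Function.update_of_ne hlj]
        exact hN l (by simp [hlj, hl])
    have hfold : L.foldr (fun i f => (pderiv' i)^[N i] f) C
        = L.foldr (fun i f => (pderiv' i)^[N' i] f) C := by
      apply foldr_congr
      intro l hl
      have hlj : l ≠ jj := by rintro rfl; exact hj hl
      rw [hN'def, Function.update_of_ne hlj]
    have hD : IsTrig (L.foldr (fun i f => (pderiv' i)^[N i] f) C) := isTrig_foldr hC N L
    have hDval : ∀ θ' : Fin M → ℝ, (L.foldr (fun i f => (pderiv' i)^[N i] f) C) θ'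
        = (1 / 2 ^ (∑ l, N' l)) *
            ∑ ω ∈ Fintype.piFinset (fun l => pascalSupport (N' l)),
              (∏ l, ((pascalD (ω l) (N' l) : ℝ))) *
                C (θ' + fun l => Real.pi * ((ω l : ℚ) : ℝ)) := by
      intro θ'
      rw [hfold]
      exact ih hL' N' hN'L θ'
    rw [List.foldr_cons, pderiv'_iter_formula hD jj (N jj) θ]
    -- rewrite D values
    have step1 : ∀ x : ℚ, (L.foldr (fun i f => (pderiv' i)^[N i] f) C) (Function.update θ jj (θ jj + Real.pi * ((x : ℚ) : ℝ)))
        = (1 / 2 ^ (∑ l, N' l)) *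
            ∑ ω ∈ Fintype.piFinset (fun l => pascalSupport (N' l)),
              (∏ l, ((pascalD (ω l) (N' l) : ℝ))) *
                C (Function.update θ jj (θ jj + Real.pi * ((x : ℚ) : ℝ))
                    + fun l => Real.pi * ((ω l : ℚ) : ℝ)) :=
      fun x => hDval _
    simp only [step1]
    -- sum over full piFinset = double sum
    have hsplit : (∑ l, N l) = N jj + ∑ l, N' l := by
      have h1 : (∑ l, N' l) = ∑ l ∈ Finset.univ.erase jj, N l := by
        rw [hN'def]
        rw [show (∑ l, Function.update N jj 0 l) = 0 + ∑ l ∈ Finset.univ \ {jj}, N l from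
          Finset.sum_update_of_mem (Finset.mem_univ jj) N 0]
        rw [zero_add, Finset.sdiff_singleton_eq_erase]
      rw [h1, Finset.add_sum_erase _ N (Finset.mem_univ jj)]
    -- reindex
    have hreindex :
        (∑ ω ∈ Fintype.piFinset (fun l => pascalSupport (N l)),
          (∏ l, ((pascalD (ω l) (N l) : ℝ))) * C (θ + fun l => Real.pi * ((ω l : ℚ) : ℝ)))
        = ∑ x ∈ pascalSupport (N jj), ∑ ω ∈ Fintype.piFinset (fun l => pascalSupport (N' l)),
            ((pascalD x (N jj) : ℝ) * ∏ l, ((pascalD (ω l) (N' l) : ℝ))) *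
              C (θ + fun l => Real.pi * (((Function.update ω jj x) l : ℚ) : ℝ)) := by
      rw [← Finset.sum_product']
      apply Finset.sum_nbij' (i := fun ω => (ω jj, Function.update ω jj 0))
        (j := fun p => Function.update p.2 jj p.1)
      · intro ω hω
        rw [Fintype.mem_piFinset] at hω
        rw [Finset.mem_product]
        constructor
        · exact hω jj
        · rw [Fintype.mem_piFinset]
          intro l
          show Function.update ω jj 0 l ∈ pascalSupport (N' l)
          by_cases hlj : l = jj
          · subst hlj
            simp [hN'def, pascalSupport]
          · rw [Function.update_of_ne hlj, hN'def, Function.update_of_ne hlj]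
            exact hω l
      · intro p hp
        rw [Finset.mem_product] at hp
        rw [Fintype.mem_piFinset]
        intro l
        by_cases hlj : l = jj
        · subst hlj; rw [Function.update_self]; exact hp.1
        · rw [Function.update_of_ne hlj]
          have := (Fintype.mem_piFinset.mp hp.2) l
          rwa [hN'def, Function.update_of_ne hlj] at this
      · intro ω hω
        simp only [Function.update_idem]
        exact Function.update_eq_self jj ω
      · intro p hp
        rw [Finset.mem_product] at hp
        have h0 : p.2 jj = 0 := by
          have := (Fintype.mem_piFinset.mp hp.2) jj
          rw [hN'def, Function.update_self] at this
          simpa [pascalSupport] using this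
        ext
        · rw [Function.update_self]
        · simp only [Function.update_idem]
          rw [← h0, Function.update_eq_self]
      · intro ω hω
        rw [Fintype.mem_piFinset] at hω
        -- show term equality
        have hprod : (∏ l, ((pascalD (ω l) (N l) : ℝ)))
            = (pascalD (ω jj) (N jj) : ℝ) *
              ∏ l, ((pascalD ((Function.update ω jj 0) l) (N' l) : ℝ)) := by
          have e1 : (∏ l, ((pascalD (ω l) (N l) : ℝ)))
              = (pascalD (ω jj) (N jj) : ℝ) * ∏ l ∈ Finset.univ.erase jj, ((pascalD (ω l) (N l) : ℝ)) :=
            (Finset.mul_prod_erase Finset.univ _ (Finset.mem_univ jj)).symm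
          have e2 : (∏ l, ((pascalD ((Function.update ω jj 0) l) (N' l) : ℝ)))
              = (pascalD ((Function.update ω jj 0) jj) (N' jj) : ℝ) *
                ∏ l ∈ Finset.univ.erase jj, ((pascalD ((Function.update ω jj 0) l) (N' l) : ℝ)) :=
            (Finset.mul_prod_erase Finset.univ _ (Finset.mem_univ jj)).symm
          rw [e1, e2, Function.update_self, hN'def, Function.update_self]
          have e3 : (pascalD 0 0 : ℝ) = 1 := by norm_num [pascalD]
          rw [e3, one_mul]
          congr 1
          apply Finset.prod_congr rfl
          intro l hl
          have hlj : l ≠ jj := (Finset.mem_erase.mp hl).1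
          rw [Function.update_of_ne hlj, Function.update_of_ne hlj]
        have hupd : Function.update (Function.update ω jj 0) jj (ω jj) = ω := by
          simp only [Function.update_idem]
          exact Function.update_eq_self jj ω
        rw [hprod, hupd]
    rw [hreindex, hsplit]
    simp only [Finset.mul_sum]
    apply Finset.sum_congr rfl
    intro x hx
    apply Finset.sum_congr rfl
    intro ω hω
    have hshift : (Function.update θ jj (θ jj + Real.pi * ((x : ℚ) : ℝ))
          + fun l => Real.pi * ((ω l : ℚ) : ℝ))
        = (θ + fun l => Real.pi * (((Function.update ω jj x) l : ℚ) : ℝ)) := by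
      funext m
      by_cases hlj : m = jj
      · have h0 : ω jj = 0 := by
          have := (Fintype.mem_piFinset.mp hω) jj
          rw [hN'def, Function.update_self] at this
          simpa [pascalSupport] using this
        rw [hlj]
        simp [h0]
      · simp [Function.update_of_ne hlj]
    rw [hshift, pow_add]
    ring

theorem hasDerivAt_translate {M : ℕ} {C : (Fin M → ℝ) → ℝ} (hC : IsTrig C) (i : Fin M)
    (θ v : Fin M → ℝ) :
    HasDerivAt (fun t => C (Function.update θ i t + v)) (pderiv' i C (θ + v)) (θ i) := by
  have hup : ∀ t, Function.update θ i t + v = Function.update (θ + v) i (t + v i) := by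
    intro t; funext l
    by_cases hl : l = i
    · subst hl; simp
    · simp [Function.update_of_ne hl]
  obtain ⟨a, b, c, hg⟩ := hC i (θ + v)
  have hDval : pderiv' i C (θ + v) = c * Real.cos (θ i + v i) - b * Real.sin (θ i + v i) := by
    simp only [pderiv']
    rw [deriv_trig a b c _ hg]
    rfl
  have hfun : (fun t => C (Function.update θ i t + v))
      = fun t => a + b * Real.cos (t + v i) + c * Real.sin (t + v i) :=
    funext fun t => by rw [hup t, hg]
  rw [hfun, hDval]
  exact (hasDerivAt_trig a b c (θ i + v i)).comp_add_const (θ i) (v i)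


/-- Eq. (16): the magnitude of the `(|α|+1)`-th order derivative is bounded by
`|∂ᵢ(∂₁^{N(1)} ⋯ ∂_M^{N(M)} C)(θ)| ≤ 2^{−|α|} Σ_ω (Π_l |d(ω(l), N(l))|) |∂ᵢC(θ + π ω)|`. -/
theorem higher_order_derivative_bound {M : ℕ} (C : (Fin M → ℝ) → ℝ)
    (htrig : ∀ (l : Fin M) (θ : Fin M → ℝ), ∃ a b c : ℝ, ∀ t : ℝ,
      C (Function.update θ l t) = a + b * Real.cos t + c * Real.sin t)
    (N : Fin M → ℕ) (i : Fin M) (θ : Fin M → ℝ) :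
    |pderiv' i (pdMulti N C) θ| ≤
      (1 / 2 ^ (∑ l, N l)) *
        ∑ ω ∈ Fintype.piFinset (fun l => pascalSupport (N l)),
          (∏ l, |(pascalD (ω l) (N l) : ℝ)|) *
            |pderiv' i C (θ + fun l => Real.pi * ((ω l : ℚ) : ℝ))| := by
  have hC : IsTrig C := htrig
  have hmain : ∀ θ' : Fin M → ℝ, pdMulti N C θ'
      = (1 / 2 ^ (∑ l, N l)) *
          ∑ ω ∈ Fintype.piFinset (fun l => pascalSupport (N l)),
            (∏ l, ((pascalD (ω l) (N l) : ℝ))) *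
              C (θ' + fun l => Real.pi * ((ω l : ℚ) : ℝ)) :=
    fun θ' => shift_main (List.finRange M) (List.nodup_finRange M) N
      (fun l hl => absurd (List.mem_finRange l) hl) C hC θ'
  -- derivative of pdMulti at θ in direction i
  have hder : HasDerivAt (fun t => pdMulti N C (Function.update θ i t))
      ((1 / 2 ^ (∑ l, N l)) *
        ∑ ω ∈ Fintype.piFinset (fun l => pascalSupport (N l)),
          (∏ l, ((pascalD (ω l) (N l) : ℝ))) *
            pderiv' i C (θ + fun l => Real.pi * ((ω l : ℚ) : ℝ))) (θ i) := by
    have hfun : (fun t => pdMulti N C (Function.update θ i t))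
        = fun t => (1 / 2 ^ (∑ l, N l)) *
            ∑ ω ∈ Fintype.piFinset (fun l => pascalSupport (N l)),
              (∏ l, ((pascalD (ω l) (N l) : ℝ))) *
                C (Function.update θ i t + fun l => Real.pi * ((ω l : ℚ) : ℝ)) :=
      funext fun t => hmain _
    rw [hfun]
    exact (HasDerivAt.fun_sum (fun ω _ =>
      (hasDerivAt_translate hC i θ _).const_mul (∏ l, ((pascalD (ω l) (N l) : ℝ))))).const_mul _
  have heq : pderiv' i (pdMulti N C) θ
      = (1 / 2 ^ (∑ l, N l)) *
          ∑ ω ∈ Fintype.piFinset (fun l => pascalSupport (N l)),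
            (∏ l, ((pascalD (ω l) (N l) : ℝ))) *
              pderiv' i C (θ + fun l => Real.pi * ((ω l : ℚ) : ℝ)) := by
    simp only [pderiv']
    exact hder.deriv
  rw [heq, abs_mul, abs_of_nonneg (by positivity : (0:ℝ) ≤ 1 / 2 ^ (∑ l, N l))]
  apply mul_le_mul_of_nonneg_left _ (by positivity : (0:ℝ) ≤ 1 / 2 ^ (∑ l, N l))
  refine le_trans (Finset.abs_sum_le_sum_abs _ _) ?_
  apply Finset.sum_le_sum
  intro ω _
  rw [abs_mul, Finset.abs_prod]
end

section
/- (Proposition 2) Let p ∈ ℕ, let C : (Fin p → ℝ) → ℝ be such that for every coordinate l and every point θ, the one-variable function t ↦ C(θ with l-th coordinate replaced by t) has the form a + b·cos t + c·sin t. Let N : Fin p → ℕ be multiplicities with |α| = Σ_l N(l), let i be a coordinate, and let μ be a probability measure on (Fin p → ℝ) invariant under the translations θ ↦ θ + π·ω for every shift vector ω with ω(l) in the Pascal-tree support for N(l). Suppose g = ∂ᵢC is square-integrable with ∫ g dμ = 0 and variance V = ∫ g² dμ. Then for every c > 0, μ{ θ : |∂ᵢ( ∂₁^{N(1)} ⋯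 ∂_p^{N(p)} C )(θ)| ≥ c } ≤ 2^{|α|} · V / c². -/
open MeasureTheory
open scoped ENNReal

namespace Prop2Aux

variable {p : ℕ}

def Trig (f : (Fin p → ℝ) → ℝ) : Prop :=
  ∀ (l : Fin p) (θ : Fin p → ℝ), ∃ a b c : ℝ, ∀ t : ℝ,
    f (Function.update θ l t) = a + b * Real.cos t + c * Real.sin t

noncomputable def sh (ω : Fin p → ℚ) : Fin p → ℝ := fun k => Real.pi * ((ω k : ℚ) : ℝ)

lemma trig_hasDerivAt (a b c t : ℝ) :
    HasDerivAt (fun u => a + b * Real.cos u + c * Real.sin u)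
      (b * (-Real.sin t) + c * Real.cos t) t := by
  have h1 := (Real.hasDerivAt_cos t).const_mul b
  have h2 := (Real.hasDerivAt_sin t).const_mul c
  simpa [Pi.add_def] using ((hasDerivAt_const t a).add h1).add h2

lemma pderiv_eq {f : (Fin p → ℝ) → ℝ} {l : Fin p} {θ : Fin p → ℝ} {a b c : ℝ}
    (h : ∀ t : ℝ, f (Function.update θ l t) = a + b * Real.cos t + c * Real.sin t) :
    pderiv' l f θ = b * (-Real.sin (θ l)) + c * Real.cos (θ l) := by
  have hfun : (fun t => f (Function.update θ l t))
      = fun u => a + b * Real.cos u + c * Real.sin u := funext h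
  show deriv (fun t => f (Function.update θ l t)) (θ l) = _
  rw [hfun]
  exact (trig_hasDerivAt a b c (θ l)).deriv

lemma pderiv_shift {f : (Fin p → ℝ) → ℝ} (hf : Trig f) (l : Fin p) (θ : Fin p → ℝ) :
    pderiv' l f θ =
      (f (Function.update θ l (θ l + Real.pi/2)) - f (Function.update θ l (θ l - Real.pi/2))) / 2 := by
  obtain ⟨a, b, c, h⟩ := hf l θ
  rw [pderiv_eq h, h, h]
  simp [Real.cos_add, Real.sin_add, Real.cos_sub, Real.sin_sub]
  ring

lemma trig_pderiv {f : (Fin p → ℝ) → ℝ} (hf : Trig f) (l : Fin p) : Trig (pderiv' l f) := by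
  intro k θ
  by_cases hkl : k = l
  · subst hkl
    obtain ⟨a, b, c, h⟩ := hf k θ
    refine ⟨0, c, -b, fun t => ?_⟩
    have h' : ∀ s : ℝ, f (Function.update (Function.update θ k t) k s)
        = a + b * Real.cos s + c * Real.sin s := by
      intro s; rw [Function.update_idem]; exact h s
    rw [pderiv_eq h', Function.update_self]
    ring
  · obtain ⟨a₁, b₁, c₁, h₁⟩ := hf k (Function.update θ l (θ l + Real.pi/2))
    obtain ⟨a₂, b₂, c₂, h₂⟩ := hf k (Function.update θ l (θ l - Real.pi/2))
    refine ⟨(a₁ - a₂)/2, (b₁ - b₂)/2, (c₁ - c₂)/2, fun t => ?_⟩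
    rw [pderiv_shift hf l (Function.update θ k t)]
    have e1 : Function.update (Function.update θ k t) l ((Function.update θ k t) l + Real.pi/2)
        = Function.update (Function.update θ l (θ l + Real.pi/2)) k t := by
      rw [Function.update_of_ne (Ne.symm hkl) t θ]
      exact Function.update_comm hkl t (θ l + Real.pi/2) θ
    have e2 : Function.update (Function.update θ k t) l ((Function.update θ k t) l - Real.pi/2)
        = Function.update (Function.update θ l (θ l - Real.pi/2)) k t := by
      rw [Function.update_of_ne (Ne.symm hkl) t θ]
      exact Function.update_comm hkl t (θ l - Real.pi/2) θ
    rw [e1, e2, h₁ t, h₂ t]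
    ring

lemma trig_iter {f : (Fin p → ℝ) → ℝ} (hf : Trig f) (l : Fin p) (n : ℕ) :
    Trig ((pderiv' l)^[n] f) := by
  induction n with
  | zero => exact hf
  | succ n ih => rw [Function.iterate_succ_apply']; exact trig_pderiv ih l

lemma trig_foldr (C : (Fin p → ℝ) → ℝ) (hC : Trig C) (N : Fin p → ℕ) (ls : List (Fin p)) :
    Trig (ls.foldr (fun i f => (pderiv' i)^[N i] f) C) := by
  induction ls with
  | nil => exact hC
  | cons l ls ih => exact trig_iter ih l (N l)

lemma periodic (C : (Fin p → ℝ) → ℝ) (hC : Trig C) (l : Fin p) (x : Fin p → ℝ) (s : ℝ)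
    (hs : s = 2 * Real.pi ∨ s = -(2 * Real.pi)) :
    C (Function.update x l (x l + s)) = C x := by
  obtain ⟨a, b, c, h⟩ := hC l x
  have hx : C x = a + b * Real.cos (x l) + c * Real.sin (x l) := by
    conv_lhs => rw [← Function.update_eq_self l x]
    exact h (x l)
  rw [h, hx]
  rcases hs with h' | h' <;> subst h' <;>
    simp [Real.cos_add, Real.sin_add, Real.cos_two_pi, Real.sin_two_pi]

def red (q : ℚ) : ℚ := if q = 2 then 0 else if q = -2 then 0 else q

lemma red_shift (C : (Fin p → ℝ) → ℝ) (hC : Trig C) (l : Fin p) (ω : Fin p → ℚ)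
    (θ : Fin p → ℝ) :
    C (θ + sh ω) = C (θ + sh (Function.update ω l (red (ω l)))) := by
  by_cases h2 : ω l = 2
  · have key : θ + sh ω = Function.update (θ + sh (Function.update ω l (red (ω l)))) l
        ((θ + sh (Function.update ω l (red (ω l)))) l + 2 * Real.pi) := by
      funext k
      by_cases hk : k = l
      · subst hk
        simp [sh, Function.update_self, h2, red]
        push_cast
        ring
      · simp [sh, Function.update_of_ne hk]
    rw [key, periodic C hC l _ _ (Or.inl rfl)]
  · by_cases h2' : ω l = -2
    · have key : θ + sh ω = Function.update (θ + sh (Function.update ω l (red (ω l)))) l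
          ((θ + sh (Function.update ω l (red (ω l)))) l + -(2 * Real.pi)) := by
        funext k
        by_cases hk : k = l
        · subst hk
          simp [sh, Function.update_self, h2', red]
          push_cast
          ring
        · simp [sh, Function.update_of_ne hk]
      rw [key, periodic C hC l _ _ (Or.inr rfl)]
    · rw [show red (ω l) = ω l from by simp [red, h2, h2'], Function.update_eq_self]

lemma pascalSupport_nonempty (n : ℕ) : (pascalSupport n).Nonempty := by
  unfold pascalSupport
  split_ifs <;> simp

lemma card_pascalSupport (n : ℕ) : (pascalSupport n).card ≤ 2 ^ n := by
  have haux : ∀ x y z w : ℚ, ({x, y, z, w} : Finset ℚ).card ≤ 4 := by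
    intro x y z w
    have h1 := Finset.card_insert_le x ({y, z, w} : Finset ℚ)
    have h2 := Finset.card_insert_le y ({z, w} : Finset ℚ)
    have h3 := Finset.card_insert_le z ({w} : Finset ℚ)
    have h4 : ({w} : Finset ℚ).card = 1 := Finset.card_singleton w
    omega
  have haux3 : ∀ x y z : ℚ, ({x, y, z} : Finset ℚ).card ≤ 4 := by
    intro x y z
    have h2 := Finset.card_insert_le x ({y, z} : Finset ℚ)
    have h3 := Finset.card_insert_le y ({z} : Finset ℚ)
    have h4 : ({z} : Finset ℚ).card = 1 := Finset.card_singleton z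
    omega
  unfold pascalSupport
  split_ifs with h0 h1 h2
  · simpa using Nat.one_le_two_pow
  · subst h1
    have h2 := Finset.card_insert_le (1/2 : ℚ) ({-1/2} : Finset ℚ)
    have h4 : ({-1/2} : Finset ℚ).card = 1 := Finset.card_singleton _
    omega
  all_goals
    have hn : 2 ≤ n := by omega
  · exact le_trans (haux3 _ _ _) (by calc (4:ℕ) = 2 ^ 2 := by norm_num
      _ ≤ 2 ^ n := Nat.pow_le_pow_right (by norm_num) hn)
  · exact le_trans (haux _ _ _ _) (by calc (4:ℕ) = 2 ^ 2 := by norm_num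
      _ ≤ 2 ^ n := Nat.pow_le_pow_right (by norm_num) hn)

lemma red_mem_step {m : ℕ} {q : ℚ} (hq : q ∈ pascalSupport m) :
    red (q + 1/2) ∈ pascalSupport (m + 1) ∧ red (q - 1/2) ∈ pascalSupport (m + 1) := by
  have hmem : ∀ x : ℚ, x ∈ ({1/2, -1/2, 3/2, -3/2} : Finset ℚ) ↔
      (x = 1/2 ∨ x = -1/2 ∨ x = 3/2 ∨ x = -3/2) := by
    intro x; simp [Finset.mem_insert]
  have hmem3 : ∀ x : ℚ, x ∈ ({0, 1, -1} : Finset ℚ) ↔ (x = 0 ∨ x = 1 ∨ x = -1) := by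
    intro x; simp [Finset.mem_insert]
  rcases m with _ | _ | m
  · norm_num [pascalSupport] at hq
    subst hq
    norm_num [pascalSupport, red]
  · norm_num [pascalSupport] at hq
    have h2 : pascalSupport 2 = {0, 1, -1} := by norm_num [pascalSupport]
    rcases hq with h | h <;> subst h <;> rw [show (1:ℕ)+1 = 2 from rfl, h2] <;>
      constructor <;> rw [hmem3] <;> norm_num [red]
  · have hs1 : pascalSupport (m + 2) = if m % 2 = 0 then ({0, 1, -1} : Finset ℚ)
        else {1/2, -1/2, 3/2, -3/2} := by
      have h' : (m + 2) % 2 = m % 2 := by omega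
      simp [pascalSupport, h']
    have hs2 : pascalSupport (m + 3) = if m % 2 = 0 then ({1/2, -1/2, 3/2, -3/2} : Finset ℚ)
        else {0, 1, -1} := by
      rcases Nat.mod_two_eq_zero_or_one m with h | h <;>
        simp [pascalSupport, Nat.add_mod, h]
    rcases Nat.mod_two_eq_zero_or_one m with h | h
    · rw [hs1, if_pos h, hmem3] at hq
      rw [show m + 2 + 1 = m + 3 from rfl, hs2, if_pos h]
      rcases hq with h' | h' | h' <;> subst h' <;> constructor <;> rw [hmem] <;> norm_num [red]
    · rw [hs1, if_neg (by omega), hmem] at hq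
      rw [show m + 2 + 1 = m + 3 from rfl, hs2, if_neg (by omega)]
      rcases hq with h' | h' | h' | h' <;> subst h' <;> constructor <;> rw [hmem3] <;>
        norm_num [red]

lemma shift_half (C : (Fin p → ℝ) → ℝ) (l : Fin p) (θ : Fin p → ℝ) (ω : Fin p → ℚ)
    (σ : ℚ) (s : ℝ) (hσs : ((σ : ℚ) : ℝ) * Real.pi = s) :
    C (Function.update θ l (θ l + s) + sh ω) = C (θ + sh (Function.update ω l (ω l + σ))) := by
  congr 1
  funext k
  by_cases hk : k = l
  · subst hk
    simp only [Pi.add_apply, Function.update_self, sh]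
    push_cast
    rw [← hσs]
    ring
  · simp [sh, Function.update_of_ne hk]

lemma shift_half_red (C : (Fin p → ℝ) → ℝ) (hC : Trig C) (l : Fin p) (θ : Fin p → ℝ)
    (ω : Fin p → ℚ) (σ : ℚ) (s : ℝ) (hσs : ((σ : ℚ) : ℝ) * Real.pi = s) :
    C (Function.update θ l (θ l + s) + sh ω)
      = C (θ + sh (Function.update ω l (red (ω l + σ)))) := by
  rw [shift_half C l θ ω σ s hσs, red_shift C hC l _ θ]
  congr 2
  rw [Function.update_idem, Function.update_self]

lemma repr_step (C : (Fin p → ℝ) → ℝ) (hC : Trig C) {F : (Fin p → ℝ) → ℝ} (hF : Trig F)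
    (l : Fin p) (m : ℕ) (pred : Fin p → ℚ → Prop)
    (L : List (ℝ × (Fin p → ℚ)))
    (hs : (L.map fun j => |j.1|).sum ≤ 1)
    (hm : ∀ j ∈ L, j.2 l ∈ pascalSupport m)
    (hp : ∀ j ∈ L, ∀ k, k ≠ l → pred k (j.2 k))
    (hrep : ∀ θ, F θ = (L.map fun j => j.1 * C (θ + sh j.2)).sum) :
    ∃ L' : List (ℝ × (Fin p → ℚ)),
      (L'.map fun j => |j.1|).sum ≤ 1 ∧
      (∀ j ∈ L', j.2 l ∈ pascalSupport (m + 1)) ∧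
      (∀ j ∈ L', ∀ k, k ≠ l → pred k (j.2 k)) ∧
      ∀ θ, pderiv' l F θ = (L'.map fun j => j.1 * C (θ + sh j.2)).sum := by
  classical
  refine ⟨(L.map fun j => (j.1 / 2, Function.update j.2 l (red (j.2 l + 1/2)))) ++
          (L.map fun j => (-(j.1 / 2), Function.update j.2 l (red (j.2 l - 1/2)))), ?_, ?_, ?_, ?_⟩
  · rw [List.map_append, List.sum_append, List.map_map, List.map_map]
    have e1 : ((fun j : ℝ × (Fin p → ℚ) => |j.1|) ∘
        (fun j : ℝ × (Fin p → ℚ) => (j.1 / 2, Function.update j.2 l (red (j.2 l + 1/2)))))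
        = fun j : ℝ × (Fin p → ℚ) => |j.1| * (1/2) := by
      funext j; simp [Function.comp, abs_div]; ring
    have e2 : ((fun j : ℝ × (Fin p → ℚ) => |j.1|) ∘
        (fun j : ℝ × (Fin p → ℚ) => (-(j.1 / 2), Function.update j.2 l (red (j.2 l - 1/2)))))
        = fun j : ℝ × (Fin p → ℚ) => |j.1| * (1/2) := by
      funext j; simp [Function.comp, abs_div]; ring
    rw [e1, e2, List.sum_map_mul_right]
    linarith
  · intro j hj
    rw [List.mem_append] at hj
    rcases hj with hj | hj <;> rw [List.mem_map] at hj <;> obtain ⟨j₀, hj₀, rfl⟩ := hj <;>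
      simp only [Function.update_self]
    · exact (red_mem_step (hm j₀ hj₀)).1
    · exact (red_mem_step (hm j₀ hj₀)).2
  · intro j hj k hk
    rw [List.mem_append] at hj
    rcases hj with hj | hj <;> rw [List.mem_map] at hj <;> obtain ⟨j₀, hj₀, rfl⟩ := hj <;>
      simp only [Function.update_of_ne hk] <;> exact hp j₀ hj₀ k hk
  · intro θ
    rw [pderiv_shift hF l θ, hrep, hrep,
      List.map_append, List.sum_append, List.map_map, List.map_map]
    have e1 : ((fun j : ℝ × (Fin p → ℚ) => j.1 * C (θ + sh j.2)) ∘
        (fun j : ℝ × (Fin p → ℚ) => (j.1 / 2, Function.update j.2 l (red (j.2 l + 1/2)))))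
        = fun j : ℝ × (Fin p → ℚ) =>
            (j.1 * C (Function.update θ l (θ l + Real.pi/2) + sh j.2)) * (1/2) := by
      funext j
      simp only [Function.comp]
      rw [shift_half_red C hC l θ j.2 (1/2) (Real.pi/2) (by push_cast; ring)]
      ring
    have e2 : ((fun j : ℝ × (Fin p → ℚ) => j.1 * C (θ + sh j.2)) ∘
        (fun j : ℝ × (Fin p → ℚ) => (-(j.1 / 2), Function.update j.2 l (red (j.2 l - 1/2)))))
        = fun j : ℝ × (Fin p → ℚ) =>
            (j.1 * C (Function.update θ l (θ l - Real.pi/2) + sh j.2)) * (-(1/2)) := by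
      funext j
      simp only [Function.comp]
      have : θ l - Real.pi/2 = θ l + -(Real.pi/2) := by ring
      rw [this, shift_half_red C hC l θ j.2 (-(1/2)) (-(Real.pi/2)) (by push_cast; ring)]
      have : j.2 l + -(1/2) = j.2 l - 1/2 := by ring
      rw [this]
      ring
    rw [e1, e2, List.sum_map_mul_right, List.sum_map_mul_right]
    ring

lemma repr_iter (C : (Fin p → ℝ) → ℝ) (hC : Trig C) (l : Fin p) (pred : Fin p → ℚ → Prop)
    (n : ℕ) :
    ∀ (F : (Fin p → ℝ) → ℝ), Trig F → ∀ (m : ℕ) (L : List (ℝ × (Fin p → ℚ))),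
      (L.map fun j => |j.1|).sum ≤ 1 →
      (∀ j ∈ L, j.2 l ∈ pascalSupport m) →
      (∀ j ∈ L, ∀ k, k ≠ l → pred k (j.2 k)) →
      (∀ θ, F θ = (L.map fun j => j.1 * C (θ + sh j.2)).sum) →
      ∃ L' : List (ℝ × (Fin p → ℚ)),
        (L'.map fun j => |j.1|).sum ≤ 1 ∧
        (∀ j ∈ L', j.2 l ∈ pascalSupport (m + n)) ∧
        (∀ j ∈ L', ∀ k, k ≠ l → pred k (j.2 k)) ∧
        ∀ θ, (pderiv' l)^[n] F θ = (L'.map fun j => j.1 * C (θ + sh j.2)).sum := by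
  induction n with
  | zero => intro F hF m L h1 h2 h3 h4; exact ⟨L, h1, h2, h3, h4⟩
  | succ n ih =>
    intro F hF m L h1 h2 h3 h4
    obtain ⟨L', hs', hm', hp', hrep'⟩ := ih F hF m L h1 h2 h3 h4
    obtain ⟨L'', a, b, c, d⟩ :=
      repr_step C hC (trig_iter hF l n) l (m + n) pred L' hs' hm' hp' hrep'
    refine ⟨L'', a, ?_, c, ?_⟩
    · intro j hj
      have : m + (n + 1) = m + n + 1 := by omega
      rw [this]
      exact b j hj
    · intro θ
      rw [Function.iterate_succ_apply']
      exact d θ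

lemma repr_foldr (C : (Fin p → ℝ) → ℝ) (hC : Trig C) (N : Fin p → ℕ) :
    ∀ ls : List (Fin p), ls.Nodup →
    ∃ L : List (ℝ × (Fin p → ℚ)),
      (L.map fun j => |j.1|).sum ≤ 1 ∧
      (∀ j ∈ L, ∀ k : Fin p,
        (k ∈ ls → j.2 k ∈ pascalSupport (N k)) ∧ (k ∉ ls → j.2 k = 0)) ∧
      ∀ θ, (ls.foldr (fun i f => (pderiv' i)^[N i] f) C) θ
        = (L.map fun j => j.1 * C (θ + sh j.2)).sum := by
  intro ls
  induction ls with
  | nil =>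
    intro _
    refine ⟨[(1, fun _ => 0)], by norm_num, ?_, ?_⟩
    · intro j hj k
      simp only [List.mem_singleton] at hj
      subst hj
      exact ⟨fun h => absurd h List.not_mem_nil, fun _ => rfl⟩
    · intro θ
      have : θ + sh (fun _ => (0 : ℚ)) = θ := by
        funext k; simp [sh]
      simp [this]
  | cons l ls ih =>
    intro hnd
    rw [List.nodup_cons] at hnd
    obtain ⟨hl, hnd'⟩ := hnd
    obtain ⟨L, h1, h2, h3⟩ := ih hnd'
    obtain ⟨L', a, b, c, d⟩ := repr_iter C hC l
      (fun k q => (k ∈ ls → q ∈ pascalSupport (N k)) ∧ (k ∉ ls → q = 0)) (N l)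
      _ (trig_foldr C hC N ls) 0 L h1
      (fun j hj => by
        rw [(h2 j hj l).2 hl]
        norm_num [pascalSupport])
      (fun j hj k _ => h2 j hj k)
      h3
    refine ⟨L', a, ?_, d⟩
    intro j hj k
    by_cases hk : k = l
    · subst hk
      constructor
      · intro _
        have := b j hj
        rwa [Nat.zero_add] at this
      · intro hmem
        exact absurd List.mem_cons_self hmem
    · constructor
      · intro hmem
        rcases List.mem_cons.mp hmem with h' | h'
        · exact absurd h' hk
        · exact (c j hj k hk).1 h'
      · intro hmem
        exact (c j hj k hk).2 fun h' => hmem (List.mem_cons_of_mem l h')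

lemma repr_final (C : (Fin p → ℝ) → ℝ) (hC : Trig C) (N : Fin p → ℕ) :
    ∃ L : List (ℝ × (Fin p → ℚ)),
      (L.map fun j => |j.1|).sum ≤ 1 ∧
      (∀ j ∈ L, j.2 ∈ Fintype.piFinset fun l => pascalSupport (N l)) ∧
      ∀ θ, pdMulti N C θ = (L.map fun j => j.1 * C (θ + sh j.2)).sum := by
  obtain ⟨L, h1, h2, h3⟩ := repr_foldr C hC N (List.finRange p) (List.nodup_finRange p)
  exact ⟨L, h1, fun j hj => Fintype.mem_piFinset.mpr
    fun l => (h2 j hj l).1 (List.mem_finRange l), h3⟩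

lemma hasDerivAt_list_sum {ι : Type*} (L : List ι) (f : ι → ℝ → ℝ) (f' : ι → ℝ) (x : ℝ)
    (h : ∀ j ∈ L, HasDerivAt (f j) (f' j) x) :
    HasDerivAt (fun t => (L.map fun j => f j t).sum) ((L.map f').sum) x := by
  induction L with
  | nil => simpa using hasDerivAt_const x (0 : ℝ)
  | cons a L ih =>
    simp only [List.map_cons, List.sum_cons]
    exact (h a List.mem_cons_self).add
      (ih fun j hj => h j (List.mem_cons_of_mem a hj))

lemma pderiv_swap (C : (Fin p → ℝ) → ℝ) (hC : Trig C) (i : Fin p)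
    (L : List (ℝ × (Fin p → ℚ))) {F : (Fin p → ℝ) → ℝ}
    (hrep : ∀ θ, F θ = (L.map fun j => j.1 * C (θ + sh j.2)).sum) (θ : Fin p → ℝ) :
    pderiv' i F θ = (L.map fun j => j.1 * pderiv' i C (θ + sh j.2)).sum := by
  have key : ∀ j : ℝ × (Fin p → ℚ),
      HasDerivAt (fun t => j.1 * C (Function.update θ i t + sh j.2))
        (j.1 * pderiv' i C (θ + sh j.2)) (θ i) := by
    intro j
    obtain ⟨a, b, c, h⟩ := hC i (θ + sh j.2)
    have hpt : ∀ t : ℝ, Function.update θ i t + sh j.2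
        = Function.update (θ + sh j.2) i (t + sh j.2 i) := by
      intro t
      funext k
      by_cases hk : k = i
      · subst hk; simp
      · simp [Function.update_of_ne hk]
    have hfun : (fun t => C (Function.update θ i t + sh j.2))
        = fun t => a + b * Real.cos (t + sh j.2 i) + c * Real.sin (t + sh j.2 i) := by
      funext t; rw [hpt t, h]
    have hgval : pderiv' i C (θ + sh j.2)
        = b * (-Real.sin ((θ + sh j.2) i)) + c * Real.cos ((θ + sh j.2) i) := pderiv_eq h
    have hd : HasDerivAt (fun t => a + b * Real.cos (t + sh j.2 i) + c * Real.sin (t + sh j.2 i))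
        (b * (-Real.sin (θ i + sh j.2 i)) + c * Real.cos (θ i + sh j.2 i)) (θ i) := by
      exact HasDerivAt.comp_add_const (θ i) (sh j.2 i) (trig_hasDerivAt a b c (θ i + sh j.2 i))
    have hd' : HasDerivAt (fun t => C (Function.update θ i t + sh j.2))
        (pderiv' i C (θ + sh j.2)) (θ i) := by
      rw [hfun, hgval]
      have : (θ + sh j.2) i = θ i + sh j.2 i := rfl
      rw [this]
      exact hd
    exact hd'.const_mul j.1
  have hFfun : (fun t => F (Function.update θ i t))
      = fun t => (L.map fun j => j.1 * C (Function.update θ i t + sh j.2)).sum :=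
    funext fun t => hrep _
  show deriv (fun t => F (Function.update θ i t)) (θ i) = _
  rw [hFfun]
  exact (hasDerivAt_list_sum L (fun j t => j.1 * C (Function.update θ i t + sh j.2))
    (fun j => j.1 * pderiv' i C (θ + sh j.2)) (θ i) (fun j _ => key j)).deriv

lemma abs_list_sum_le {ι : Type*} (L : List ι) (f : ι → ℝ) :
    |(L.map f).sum| ≤ (L.map fun j => |f j|).sum := by
  induction L with
  | nil => simp
  | cons a L ih =>
    simp only [List.map_cons, List.sum_cons]
    exact le_trans (abs_add_le _ _) (by linarith)

end Prop2Aux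

/-- Proposition 2: for a cost `C` of trigonometric form in each coordinate, multiplicities `N`
with `|α| = Σ N(l)`, a coordinate `i`, and a probability measure `μ` invariant under all the
Pascal-tree parameter shifts, if `g = ∂ᵢC` is square-integrable with mean zero and variance
`V`, then for every `c > 0`,
`μ{θ : |∂ᵢ(∂₁^{N(1)} ⋯ ∂_p^{N(p)} C)(θ)| ≥ c} ≤ 2^{|α|} V / c²`. -/
theorem prop2_higher_order_chebyshev {p : ℕ} (C : (Fin p → ℝ) → ℝ)
    (htrig : ∀ (l : Fin p) (θ : Fin p → ℝ), ∃ a b c : ℝ, ∀ t : ℝ,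
      C (Function.update θ l t) = a + b * Real.cos t + c * Real.sin t)
    (N : Fin p → ℕ) (i : Fin p)
    (μ : Measure (Fin p → ℝ)) [IsProbabilityMeasure μ]
    (hμ : ∀ ω ∈ Fintype.piFinset (fun l => pascalSupport (N l)),
      MeasurePreserving (fun θ : Fin p → ℝ => θ + fun l => Real.pi * ((ω l : ℚ) : ℝ)) μ μ)
    (g : (Fin p → ℝ) → ℝ) (hg : g = pderiv' i C)
    (hL2 : MemLp g 2 μ) (hmean : ∫ θ, g θ ∂μ = 0)
    (V : ℝ) (hV : V = ∫ θ, (g θ) ^ 2 ∂μ)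
    (c : ℝ) (hc : 0 < c) :
    μ {θ | c ≤ |pderiv' i (pdMulti N C) θ|} ≤
      ENNReal.ofReal (2 ^ (∑ l, N l) * V / c ^ 2) := by
  classical
  have hC : Prop2Aux.Trig C := htrig
  set S : Finset (Fin p → ℚ) := Fintype.piFinset fun l => pascalSupport (N l) with hSdef
  have hSne : S.Nonempty :=
    Fintype.piFinset_nonempty.mpr fun l => Prop2Aux.pascalSupport_nonempty _
  obtain ⟨L, hs, hmem, hrep⟩ := Prop2Aux.repr_final C hC N
  have hmem' : ∀ j ∈ L, j.2 ∈ S := hmem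
  have hD : ∀ θ, pderiv' i (pdMulti N C) θ
      = (L.map fun j => j.1 * g (θ + Prop2Aux.sh j.2)).sum := by
    intro θ
    rw [hg]
    exact Prop2Aux.pderiv_swap C hC i L hrep θ
  have hsub : {θ : Fin p → ℝ | c ≤ |pderiv' i (pdMulti N C) θ|}
      ⊆ ⋃ ω ∈ S, {θ : Fin p → ℝ | c ≤ |g (θ + Prop2Aux.sh ω)|} := by
    intro θ hθ
    have hθ' : c ≤ |pderiv' i (pdMulti N C) θ| := hθ
    by_contra hcon
    simp only [Set.mem_iUnion, Set.mem_setOf_eq, not_exists, not_le] at hcon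
    set mx := S.sup' hSne fun ω => |g (θ + Prop2Aux.sh ω)| with hmx
    have hmx0 : 0 ≤ mx :=
      le_trans (abs_nonneg (g (θ + Prop2Aux.sh hSne.choose)))
        (Finset.le_sup' (fun ω => |g (θ + Prop2Aux.sh ω)|) hSne.choose_spec)
    have hmxc : mx < c := (Finset.sup'_lt_iff hSne).mpr fun ω hω => hcon ω hω
    have hb : |pderiv' i (pdMulti N C) θ| ≤ mx := by
      rw [hD θ]
      calc |(L.map fun j => j.1 * g (θ + Prop2Aux.sh j.2)).sum|
          ≤ (L.map fun j => |j.1 * g (θ + Prop2Aux.sh j.2)|).sum :=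
            Prop2Aux.abs_list_sum_le L _
        _ ≤ (L.map fun j => |j.1| * mx).sum := by
            apply List.sum_le_sum
            intro j hj
            rw [abs_mul]
            exact mul_le_mul_of_nonneg_left
              (Finset.le_sup' (fun ω => |g (θ + Prop2Aux.sh ω)|) (hmem' j hj)) (abs_nonneg _)
        _ = (L.map fun j => |j.1|).sum * mx := by rw [← List.sum_map_mul_right]
        _ ≤ 1 * mx := mul_le_mul_of_nonneg_right hs hmx0
        _ = mx := one_mul mx
    linarith
  have hgae : AEMeasurable g μ := hL2.aestronglyMeasurable.aemeasurable
  have hB : NullMeasurableSet {x : Fin p → ℝ | c ≤ |g x|} μ := by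
    have h1 : NullMeasurable g μ :=
      hgae.measurable_mk.nullMeasurable.congr hgae.ae_eq_mk.symm
    have h2 : NullMeasurable (fun x => |g x|) μ :=
      Measurable.comp_nullMeasurable (measurable_abs) h1
    exact h2 measurableSet_Ici
  have hvar : ProbabilityTheory.variance g μ = V := by
    rw [ProbabilityTheory.variance_eq_sub hL2, hmean, hV]
    simp
  have hcheb : μ {x : Fin p → ℝ | c ≤ |g x|} ≤ ENNReal.ofReal (V / c ^ 2) := by
    have h := ProbabilityTheory.meas_ge_le_variance_div_sq (μ := μ) hL2 hc
    rw [hmean, hvar] at h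
    simpa using h
  have hAω : ∀ ω ∈ S, μ {θ : Fin p → ℝ | c ≤ |g (θ + Prop2Aux.sh ω)|}
      ≤ ENNReal.ofReal (V / c ^ 2) := by
    intro ω hω
    have hmp := hμ ω hω
    have hset : {θ : Fin p → ℝ | c ≤ |g (θ + Prop2Aux.sh ω)|}
        = (fun θ : Fin p → ℝ => θ + fun l => Real.pi * ((ω l : ℚ) : ℝ)) ⁻¹'
          {x : Fin p → ℝ | c ≤ |g x|} := rfl
    rw [hset, hmp.measure_preimage hB]
    exact hcheb
  have hcard : (S.card : ℝ≥0∞) ≤ 2 ^ (∑ l, N l) := by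
    have h1 : S.card ≤ 2 ^ (∑ l, N l) := by
      rw [hSdef, Fintype.card_piFinset]
      calc ∏ l, (pascalSupport (N l)).card ≤ ∏ l, 2 ^ (N l) :=
          Finset.prod_le_prod' fun l _ => Prop2Aux.card_pascalSupport (N l)
        _ = 2 ^ (∑ l, N l) := Finset.prod_pow_eq_pow_sum _ _ _
    calc (S.card : ℝ≥0∞) ≤ ((2 ^ (∑ l, N l) : ℕ) : ℝ≥0∞) := Nat.cast_le.mpr h1
      _ = 2 ^ (∑ l, N l) := by push_cast; rfl
  calc μ {θ | c ≤ |pderiv' i (pdMulti N C) θ|}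
      ≤ μ (⋃ ω ∈ S, {θ : Fin p → ℝ | c ≤ |g (θ + Prop2Aux.sh ω)|}) := measure_mono hsub
    _ ≤ ∑ ω ∈ S, μ {θ : Fin p → ℝ | c ≤ |g (θ + Prop2Aux.sh ω)|} :=
        measure_biUnion_finset_le S _
    _ ≤ ∑ _ω ∈ S, ENNReal.ofReal (V / c ^ 2) := Finset.sum_le_sum hAω
    _ = S.card * ENNReal.ofReal (V / c ^ 2) := by rw [Finset.sum_const, nsmul_eq_mul]
    _ ≤ 2 ^ (∑ l, N l) * ENNReal.ofReal (V / c ^ 2) := mul_le_mul_left hcard _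
    _ = ENNReal.ofReal (2 ^ (∑ l, N l) * V / c ^ 2) := by
        rw [mul_div_assoc, ENNReal.ofReal_mul (by positivity),
          ENNReal.ofReal_pow (by norm_num)]
        norm_num
end
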